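/- arXiv:2104.11646 — 4 statements merged into one kernel-verified Lean document; each statement's English description precedes it below -/
import Mathlib

section
/- For every two integers n and k with 2 ≤ k ≤ n, the generalized k-connectivity of the complete graph K_n equals n − ⌈k/2⌉. -/
open SimpleGraph Finset

/-- The `n`-dimensional hypercube: vertices are binary strings of length `n`,
adjacent iff they differ in exactly one coordinate. -/
def Q (n : ℕ) : SimpleGraph (Fin n → Bool) where
  Adj x y := (Finset.univ.filter fun i => x i ≠ y i).card = 1
  symm := by
    constructor
    intro x y h
    simpa [ne_comm] using h
  loopless := by constructor; intro x h; simp at h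

instance (n : ℕ) : DecidableRel (Q n).Adj := fun x y =>
  inferInstanceAs (Decidable ((Finset.univ.filter fun i => x i ≠ y i).card = 1))

/-- The `n`-dimensional folded hypercube: the hypercube plus an edge between each
vertex and its bitwise complement. -/
def FQ (n : ℕ) : SimpleGraph (Fin n → Bool) where
  Adj x y := x ≠ y ∧ ((Finset.univ.filter fun i => x i ≠ y i).card = 1 ∨ ∀ i, x i = !(y i))
  symm := by
    constructor
    rintro x y ⟨hne, h⟩
    refine ⟨hne.symm, ?_⟩
    rcases h with h | h
    · left; simpa [ne_comm] using h
    · right; intro i; simp [h i]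
  loopless := by constructor; rintro x ⟨hne, _⟩; exact hne rfl

instance (n : ℕ) : DecidableRel (FQ n).Adj := fun x y =>
  inferInstanceAs (Decidable (x ≠ y ∧ ((Finset.univ.filter fun i => x i ≠ y i).card = 1 ∨ ∀ i, x i = !(y i))))

/-- `T` is an `S`-tree in `G`: a subgraph of `G` containing `S` which is a tree. -/
def IsSTree {V : Type*} (G : SimpleGraph V) (S : Set V) (T : G.Subgraph) : Prop :=
  S ⊆ T.verts ∧ T.coe.IsTree

/-- A family of subgraphs is internally disjoint w.r.t. `S`: pairwise edge-disjoint
and any two share vertices exactly in `S`. -/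
def InternallyDisjoint {V : Type*} (G : SimpleGraph V) (S : Set V) {r : ℕ}
    (T : Fin r → G.Subgraph) : Prop :=
  ∀ i j, i ≠ j → (T i).edgeSet ∩ (T j).edgeSet = ∅ ∧ (T i).verts ∩ (T j).verts = S

/-- The maximum number of internally disjoint `S`-trees in `G`. -/
noncomputable def maxSTrees {V : Type*} (G : SimpleGraph V) (S : Set V) : ℕ :=
  sSup {r | ∃ T : Fin r → G.Subgraph, (∀ i, IsSTree G S (T i)) ∧ InternallyDisjoint G S T}

/-- The generalized `k`-connectivity of `G`. -/
noncomputable def gencon {V : Type*} [Fintype V] (G : SimpleGraph V) (k : ℕ) : ℕ :=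
  sInf ((fun S : Finset V => maxSTrees G (↑S : Set V)) '' {S | S.card = k})

/-- The vertex connectivity: minimum size of a vertex set whose removal disconnects
the graph or reduces it to at most a single vertex. -/
noncomputable def vconn {V : Type*} [Fintype V] (G : SimpleGraph V) : ℕ :=
  sInf {m | ∃ W : Finset V, W.card = m ∧
    (¬ (G.induce ((↑W : Set V)ᶜ)).Connected ∨ Fintype.card V ≤ W.card + 1)}

/-! ### Auxiliary machinery -/

section Aux

/-- The zigzag graph on `ZMod k` with edges between `a,b` whose sum is `2i` or `2i+1`.
This is a Hamiltonian path of the complete graph on `ZMod k`. -/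
def zig (k : ℕ) (i : ℕ) : SimpleGraph (ZMod k) where
  Adj a b := a ≠ b ∧ (a + b = 2*(i:ZMod k) ∨ a + b = 2*(i:ZMod k)+1)
  symm := by
    constructor
    rintro a b ⟨hne, hs⟩
    exact ⟨hne.symm, by rwa [add_comm]⟩
  loopless := by constructor; rintro a ⟨hne, _⟩; exact hne rfl

lemma zmod_natCast_inj {k : ℕ} [NeZero k] {a b : ℕ} (ha : a < k) (hb : b < k)
    (h : (a : ZMod k) = (b : ZMod k)) : a = b := by
  have := congrArg ZMod.val h
  rwa [ZMod.val_natCast_of_lt ha, ZMod.val_natCast_of_lt hb] at this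

lemma zmod_cast_small {k : ℕ} [NeZero k] {a c : ℕ} (ha : a < 2*k) (hc : c < k)
    (h : (a : ZMod k) = (c : ZMod k)) : a = c ∨ a = c + k := by
  rw [ZMod.natCast_eq_iff] at h
  obtain ⟨m, hm⟩ := h
  rw [ZMod.val_natCast_of_lt hc] at hm
  rcases Nat.lt_or_ge m 2 with hm2 | hm2
  · interval_cases m <;> omega
  · exfalso
    have : k * 2 ≤ k * m := Nat.mul_le_mul_left k hm2
    have hk := (NeZero.pos k)
    omega

lemma zig_adj_val {k : ℕ} (hk : 2 ≤ k) {i : ℕ} {u v : ZMod k} (h : (zig k i).Adj u v) :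
    (u - (i:ZMod k)).val ≠ (v - (i:ZMod k)).val ∧
      ((u - (i:ZMod k)).val + (v - (i:ZMod k)).val = 1 ∨
       (u - (i:ZMod k)).val + (v - (i:ZMod k)).val = k ∨
       (u - (i:ZMod k)).val + (v - (i:ZMod k)).val = k + 1) := by
  haveI : NeZero k := ⟨by omega⟩
  obtain ⟨hne, hs⟩ := h
  set a := (u - (i:ZMod k)).val with hadef
  set b := (v - (i:ZMod k)).val with hbdef
  have hau : ((a : ZMod k)) = u - (i:ZMod k) := by rw [hadef, ZMod.natCast_val, ZMod.cast_id]
  have hbv : ((b : ZMod k)) = v - (i:ZMod k) := by rw [hbdef, ZMod.natCast_val, ZMod.cast_id]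
  have hne' : a ≠ b := by
    intro hab
    apply hne
    have : u - (i:ZMod k) = v - (i:ZMod k) := by rw [← hau, ← hbv, hab]
    linear_combination this
  refine ⟨hne', ?_⟩
  have ha : a < k := ZMod.val_lt _
  have hb : b < k := ZMod.val_lt _
  rcases hs with hs | hs
  · have : ((a + b : ℕ) : ZMod k) = ((0 : ℕ) : ZMod k) := by
      push_cast
      rw [hau, hbv]
      linear_combination hs
    rcases zmod_cast_small (by omega) (by omega) this with h' | h' <;> omega
  · have : ((a + b : ℕ) : ZMod k) = ((1 : ℕ) : ZMod k) := by
      push_cast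
      rw [hau, hbv]
      linear_combination hs
    rcases zmod_cast_small (by omega) (by omega) this with h' | h' <;> omega

/-- A graph admitting a level function where each vertex has at most one lower
neighbour is acyclic. -/
lemma isAcyclic_of_level {V : Type*} (G : SimpleGraph V) (f : V → ℕ)
    (h1 : ∀ u v, G.Adj u v → f u = f v + 1 ∨ f v = f u + 1)
    (h2 : ∀ u v w, G.Adj u v → G.Adj u w → f v < f u → f w < f u → v = w) :
    G.IsAcyclic := by
  classical
  intro v0 c hc
  obtain ⟨u, hu, hmax⟩ := Finset.exists_max_image c.support.toFinset f
    (by simp [SimpleGraph.Walk.support_ne_nil, List.toFinset_eq_empty_iff,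
      Finset.nonempty_iff_ne_empty])
  rw [List.mem_toFinset] at hu
  have hmax' : ∀ z ∈ c.support, f z ≤ f u := fun z hz => hmax z (List.mem_toFinset.2 hz)
  have hdc : (c.rotate u hu).IsCycle := hc.rotate hu
  have hdmax : ∀ z ∈ (c.rotate u hu).support, f z ≤ f u := by
    intro z hz
    rcases List.mem_cons.1 (by rw [(c.rotate u hu).support_eq_cons] at hz; exact hz) with h | h
    · exact h ▸ le_refl _
    · exact hmax' z (List.mem_of_mem_tail
        ((SimpleGraph.Walk.support_rotate c u hu).mem_iff.1 h))
  revert hdc hdmax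
  generalize c.rotate u hu = d
  intro hdc hdmax
  cases d with
  | nil => exact hdc.ne_nil rfl
  | cons h q =>
    rename_i x
    obtain ⟨y, q2, h2', heq⟩ := SimpleGraph.Walk.exists_cons_eq_concat h q
    have hxd : x ∈ (Walk.cons h q).support := by
      rw [Walk.support_cons]
      exact List.mem_cons_of_mem _ q.start_mem_support
    have hyd : y ∈ (Walk.cons h q).support := by
      rw [heq, Walk.support_concat]
      exact List.mem_append_left _ q2.end_mem_support
    have hfx : f x < f u := by
      rcases h1 u x h with h' | h'
      · omega
      · have := hdmax x hxd; omega
    have hfy : f y < f u := by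
      rcases h1 u y h2'.symm with h' | h'
      · omega
      · have := hdmax y hyd; omega
    have hxy : x = y := h2 u x y h h2'.symm hfx hfy
    subst hxy
    have hednd : (Walk.cons h q).edges.Nodup := hdc.edges_nodup
    have he1 : (Walk.cons h q).edges = s(u, x) :: q.edges := Walk.edges_cons h q
    have he2 : (Walk.cons h q).edges = q2.edges ++ [s(x, u)] := by
      rw [heq, Walk.edges_concat, List.concat_eq_append]
    have hlen : 3 ≤ (Walk.cons h q).length := hdc.three_le_length
    have hq2len : q2.edges ≠ [] := by
      intro hnil
      have l1 : q2.edges.length = q2.length := Walk.length_edges _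
      have l2 : (Walk.cons h q).length = q2.length + 1 := by
        rw [heq, Walk.length_concat]
      rw [hnil] at l1
      simp at l1
      omega
    rw [he1] at he2 hednd
    cases hq2 : q2.edges with
    | nil => exact hq2len hq2
    | cons e t =>
      rw [hq2] at he2
      have hhead : s(u,x) = e ∧ q.edges = t ++ [s(x,u)] := by
        exact ⟨(List.cons_eq_cons.mp he2).1, (List.cons_eq_cons.mp he2).2⟩
      have : s(u,x) ∈ q.edges := by
        rw [hhead.2]
        simp [Sym2.eq_swap]
      simp only [List.nodup_cons] at hednd
      exact hednd.1 this

lemma zig_connected {k : ℕ} (hk : 2 ≤ k) (i : ℕ) : (zig k i).Connected := by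
  haveI : NeZero k := ⟨by omega⟩
  have key : ∀ t : ℕ, (zig k i).Reachable (i:ZMod k) ((i:ZMod k) + t) ∧
      (zig k i).Reachable (i:ZMod k) ((i:ZMod k) - t) := by
    intro t
    induction t with
    | zero => constructor <;> · push_cast [Nat.cast_zero]; simpa using Reachable.refl _
    | succ t ih =>
      have r1 : (zig k i).Reachable (i:ZMod k) ((i:ZMod k) + (t+1 : ℕ)) := by
        by_cases h : ((i:ZMod k) + (t+1 : ℕ)) = (i:ZMod k) - t
        · rw [h]; exact ih.2
        · refine ih.2.trans (Adj.reachable ?_)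
          refine ⟨fun hx => h hx.symm, Or.inr ?_⟩
          push_cast
          ring
      refine ⟨r1, ?_⟩
      by_cases h : ((i:ZMod k) - (t+1 : ℕ)) = ((i:ZMod k) + (t+1 : ℕ))
      · rw [h]; exact r1
      · refine r1.trans (Adj.reachable ?_)
        refine ⟨fun hx => h hx.symm, Or.inl ?_⟩
        push_cast
        ring
  have reach : ∀ v : ZMod k, (zig k i).Reachable (i:ZMod k) v := by
    intro v
    have : ((i:ZMod k) + ((v - (i:ZMod k)).val : ℕ)) = v := by
      rw [ZMod.natCast_val, ZMod.cast_id]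
      ring
    rw [← this]
    exact (key _).1
  haveI : Nonempty (ZMod k) := ⟨0⟩
  exact Connected.mk fun u v => (reach u).symm.trans (reach v)

lemma zig_isAcyclic {k : ℕ} (hk : 2 ≤ k) (i : ℕ) : (zig k i).IsAcyclic := by
  haveI : NeZero k := ⟨by omega⟩
  apply isAcyclic_of_level (zig k i)
    (fun u => min (2 * (u - (i:ZMod k)).val - 1) (2 * (k - (u - (i:ZMod k)).val)))
  · intro u v h
    obtain ⟨hne, hs⟩ := zig_adj_val hk h
    have hu : (u - (i:ZMod k)).val < k := ZMod.val_lt _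
    have hv : (v - (i:ZMod k)).val < k := ZMod.val_lt _
    simp only [Nat.min_def]
    split_ifs <;> omega
  · intro u v w huv huw hfv hfw
    obtain ⟨hne1, hs1⟩ := zig_adj_val hk huv
    obtain ⟨hne2, hs2⟩ := zig_adj_val hk huw
    by_cases htvw : (v - (i:ZMod k)).val = (w - (i:ZMod k)).val
    · have : v - (i:ZMod k) = w - (i:ZMod k) := by
        have h1 : (((v - (i:ZMod k)).val : ℕ) : ZMod k) = v - (i:ZMod k) := by
          rw [ZMod.natCast_val, ZMod.cast_id]
        have h2 : (((w - (i:ZMod k)).val : ℕ) : ZMod k) = w - (i:ZMod k) := by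
          rw [ZMod.natCast_val, ZMod.cast_id]
        rw [← h1, ← h2, htvw]
      exact sub_left_injective this
    · exfalso
      have hu : (u - (i:ZMod k)).val < k := ZMod.val_lt _
      have hv : (v - (i:ZMod k)).val < k := ZMod.val_lt _
      have hw : (w - (i:ZMod k)).val < k := ZMod.val_lt _
      simp only [Nat.min_def] at hfv hfw
      rcases hs1 with h1 | h1 | h1 <;> rcases hs2 with h2 | h2 | h2 <;>
        (split_ifs at hfv hfw <;> omega)

lemma zig_isTree {k : ℕ} (hk : 2 ≤ k) (i : ℕ) : (zig k i).IsTree :=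
  ⟨zig_connected hk i, zig_isAcyclic hk i⟩

lemma star_isTree {V : Type*} [DecidableEq V] (G : SimpleGraph V) (c : V)
    (hadj : ∀ x y, G.Adj x y ↔ x ≠ y ∧ (x = c ∨ y = c)) : G.IsTree := by
  have reach : ∀ x, G.Reachable x c := by
    intro x
    by_cases hx : x = c
    · rw [hx]
    · exact (Adj.reachable ((hadj x c).2 ⟨hx, Or.inr rfl⟩))
  constructor
  · haveI : Nonempty V := ⟨c⟩
    exact Connected.mk fun u v => (reach u).trans (reach v).symm
  · apply isAcyclic_of_level G (fun x => if x = c then 0 else 1)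
    · intro u v h
      obtain ⟨hne, hc⟩ := (hadj u v).1 h
      rcases hc with rfl | rfl
      · simp [hne.symm, hne]
      · simp [hne]
    · intro u v w huv huw hfv hfw
      have hv : v = c := by
        by_contra hvc
        simp [hvc] at hfv
        split_ifs at hfv <;> omega
      have hw : w = c := by
        by_contra hwc
        simp [hwc] at hfw
        split_ifs at hfw <;> omega
      rw [hv, hw]

lemma isTree_of_iso {V W : Type*} {G : SimpleGraph V} {H : SimpleGraph W} (e : G ≃g H)
    (h : G.IsTree) : H.IsTree := by
  constructor
  · haveI : Nonempty W := ⟨e h.isConnected.nonempty.some⟩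
    refine Connected.mk fun u v => ?_
    have := (h.isConnected.preconnected (e.symm u) (e.symm v)).map e.toHom
    simpa using this
  · intro v cw hcw
    have hinj : Function.Injective e.symm.toHom := e.symm.toEquiv.injective
    exact h.IsAcyclic _ (hcw.map hinj)

variable {n : ℕ}

/-- The star subgraph of the complete graph: centre `v`, leaves `S`. -/
def starSub (S : Finset (Fin n)) (v : Fin n) : (⊤ : SimpleGraph (Fin n)).Subgraph where
  verts := insert v ↑S
  Adj x y := (x = v ∧ y ∈ S ∧ v ∉ S) ∨ (y = v ∧ x ∈ S ∧ v ∉ S)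
  adj_sub := by
    rintro x y (⟨rfl, hy, hv⟩ | ⟨rfl, hx, hv⟩) <;> simp only [SimpleGraph.top_adj]
    · rintro rfl; exact hv hy
    · rintro rfl; exact hv hx
  edge_vert := by
    rintro x y (⟨rfl, hy, hv⟩ | ⟨rfl, hx, hv⟩)
    · exact Set.mem_insert _ _
    · exact Set.mem_insert_of_mem _ hx
  symm := by constructor; rintro x y (h | h); exacts [Or.inr h, Or.inl h]

lemma starSub_isSTree (S : Finset (Fin n)) (v : Fin n) (hv : v ∉ S) :
    IsSTree ⊤ (↑S) (starSub S v) := by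
  classical
  refine ⟨Set.subset_insert _ _, ?_⟩
  apply star_isTree _ (⟨v, Set.mem_insert _ _⟩ : ↥(starSub S v).verts)
  rintro ⟨x, hx⟩ ⟨y, hy⟩
  constructor
  · rintro (⟨hxv, hy', hv'⟩ | ⟨hyv, hx', hv'⟩)
    · refine ⟨?_, Or.inl (Subtype.ext hxv)⟩
      intro hxy
      rw [Subtype.ext_iff] at hxy
      have h1 : x = v := hxv
      have h2 : y ∈ S := hy'
      have h3 : x = y := hxy
      rw [h3] at h1
      rw [h1] at h2
      exact hv h2
    · refine ⟨?_, Or.inr (Subtype.ext hyv)⟩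
      intro hxy
      rw [Subtype.ext_iff] at hxy
      have h1 : y = v := hyv
      have h2 : x ∈ S := hx'
      have h3 : x = y := hxy
      rw [← h3] at h1
      rw [h1] at h2
      exact hv h2
  · rintro ⟨hne, (hc | hc)⟩
    · left
      have hxv : x = v := by simpa [Subtype.ext_iff] using hc
      refine ⟨hxv, ?_, hv⟩
      have : y ∈ insert v (↑S : Set (Fin n)) := hy
      rcases Set.mem_insert_iff.1 this with h | h
      · exact absurd (Subtype.ext (hxv.trans h.symm) : (⟨x,hx⟩ : ↥(starSub S v).verts) = ⟨y,hy⟩) hne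
      · exact h
    · right
      have hyv : y = v := by simpa [Subtype.ext_iff] using hc
      refine ⟨hyv, ?_, hv⟩
      have : x ∈ insert v (↑S : Set (Fin n)) := hx
      rcases Set.mem_insert_iff.1 this with h | h
      · exact absurd (Subtype.ext (h.trans hyv.symm) : (⟨x,hx⟩ : ↥(starSub S v).verts) = ⟨y,hy⟩) hne
      · exact h

/-- The zigzag subgraph of the complete graph inside `S`, transported via `σ`. -/
def insSub (S : Finset (Fin n)) {k : ℕ} (σ : ZMod k ≃ {x : Fin n // x ∈ S}) (i : ℕ) :
    (⊤ : SimpleGraph (Fin n)).Subgraph where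
  verts := ↑S
  Adj x y := ∃ (hx : x ∈ S) (hy : y ∈ S), (zig k i).Adj (σ.symm ⟨x,hx⟩) (σ.symm ⟨y,hy⟩)
  adj_sub := by
    rintro x y ⟨hx, hy, hadj⟩
    simp only [SimpleGraph.top_adj]
    rintro rfl
    exact hadj.1 (by congr)
  edge_vert := by rintro x y ⟨hx, hy, _⟩; exact hx
  symm := by constructor; rintro x y ⟨hx, hy, h⟩; exact ⟨hy, hx, h.symm⟩

lemma insSub_isSTree (S : Finset (Fin n)) {k : ℕ} (hk : 2 ≤ k)
    (σ : ZMod k ≃ {x : Fin n // x ∈ S}) (i : ℕ) : IsSTree ⊤ (↑S) (insSub S σ i) := by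
  refine ⟨le_refl _, ?_⟩
  apply isTree_of_iso _ (zig_isTree hk i)
  refine ⟨⟨fun a => ⟨↑(σ a), (σ a).2⟩, fun x => σ.symm ⟨x.1, x.2⟩, ?_, ?_⟩, ?_⟩
  · intro a
    simp only
    rw [show (⟨↑(σ a), (σ a).2⟩ : {x : Fin n // x ∈ S}) = σ a from Subtype.ext rfl,
      Equiv.symm_apply_apply]
  · rintro ⟨x, hx⟩
    simp only [Subtype.ext_iff]
    rw [Equiv.apply_symm_apply]
  · intro a b
    show (insSub S σ i).Adj ↑(σ a) ↑(σ b) ↔ (zig k i).Adj a b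
    constructor
    · rintro ⟨hx, hy, hadj⟩
      rwa [show (⟨↑(σ a), hx⟩ : {x : Fin n // x ∈ S}) = σ a from Subtype.ext rfl,
        show (⟨↑(σ b), hy⟩ : {x : Fin n // x ∈ S}) = σ b from Subtype.ext rfl,
        Equiv.symm_apply_apply, Equiv.symm_apply_apply] at hadj
    · intro h
      refine ⟨(σ a).2, (σ b).2, ?_⟩
      rw [show (⟨↑(σ a), (σ a).2⟩ : {x : Fin n // x ∈ S}) = σ a from Subtype.ext rfl,
        show (⟨↑(σ b), (σ b).2⟩ : {x : Fin n // x ∈ S}) = σ b from Subtype.ext rfl,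
        Equiv.symm_apply_apply, Equiv.symm_apply_apply]
      exact h

lemma ins_ins_edge {k : ℕ} (hk : 2 ≤ k) (S : Finset (Fin n)) (σ : ZMod k ≃ {x : Fin n // x ∈ S})
    {a b : ℕ} (ha : a < k/2) (hb : b < k/2) (hab : a ≠ b) :
    (insSub S σ a).edgeSet ∩ (insSub S σ b).edgeSet = ∅ := by
  haveI : NeZero k := ⟨by omega⟩
  apply Set.eq_empty_iff_forall_notMem.2
  intro e he
  induction e with
  | _ x y =>
    obtain ⟨h1, h2⟩ := he
    rw [SimpleGraph.Subgraph.mem_edgeSet] at h1 h2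
    obtain ⟨hx1, hy1, hadj1⟩ := h1
    obtain ⟨hx2, hy2, hadj2⟩ := h2
    have e1 : σ.symm ⟨x, hx2⟩ = σ.symm ⟨x, hx1⟩ := rfl
    have e2 : σ.symm ⟨y, hy2⟩ = σ.symm ⟨y, hy1⟩ := rfl
    rw [e1, e2] at hadj2
    have h2a : 2*a < k := by omega
    have h2a1 : 2*a+1 < k := by omega
    have h2b : 2*b < k := by omega
    have h2b1 : 2*b+1 < k := by omega
    rcases hadj1.2 with hs1 | hs1 <;> rcases hadj2.2 with hs2 | hs2
    · have : ((2*a : ℕ) : ZMod k) = ((2*b : ℕ) : ZMod k) := by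
        push_cast
        linear_combination hs2 - hs1
      have := zmod_natCast_inj h2a h2b this
      omega
    · have : ((2*a : ℕ) : ZMod k) = ((2*b+1 : ℕ) : ZMod k) := by
        push_cast
        linear_combination hs2 - hs1
      have := zmod_natCast_inj h2a h2b1 this
      omega
    · have : ((2*a+1 : ℕ) : ZMod k) = ((2*b : ℕ) : ZMod k) := by
        push_cast
        linear_combination hs2 - hs1
      have := zmod_natCast_inj h2a1 h2b this
      omega
    · have : ((2*a+1 : ℕ) : ZMod k) = ((2*b+1 : ℕ) : ZMod k) := by
        push_cast
        linear_combination hs2 - hs1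
      have := zmod_natCast_inj h2a1 h2b1 this
      omega

lemma lower_bound {k : ℕ} (hk : 2 ≤ k) (hkn : k ≤ n) (S : Finset (Fin n)) (hS : S.card = k) :
    ((n - k) + k/2) ∈ {r | ∃ T : Fin r → (⊤ : SimpleGraph (Fin n)).Subgraph,
      (∀ i, IsSTree ⊤ (↑S : Set (Fin n)) (T i)) ∧ InternallyDisjoint ⊤ (↑S) T} := by
  classical
  haveI : NeZero k := ⟨by omega⟩
  have hσcard : Fintype.card (ZMod k) = Fintype.card {x : Fin n // x ∈ S} := by
    rw [ZMod.card, Fintype.card_coe, hS]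
  let σ : ZMod k ≃ {x : Fin n // x ∈ S} := Fintype.equivOfCardEq hσcard
  have hτcard : Fintype.card (Fin (n-k)) = Fintype.card {x : Fin n // x ∈ Sᶜ} := by
    rw [Fintype.card_fin, Fintype.card_coe, Finset.card_compl, Fintype.card_fin, hS]
  let τ : Fin (n-k) ≃ {x : Fin n // x ∈ Sᶜ} := Fintype.equivOfCardEq hτcard
  have hτS : ∀ a : Fin (n-k), ((τ a : Fin n)) ∉ S := fun a => Finset.mem_compl.1 (τ a).2
  have hτne : ∀ a b : Fin (n-k), a ≠ b → ((τ a : Fin n)) ≠ ((τ b : Fin n)) := by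
    intro a b hab h
    exact hab (τ.injective (Subtype.ext h))
  -- helper facts
  have star_star_edge : ∀ v w : Fin n, v ∉ S → w ∉ S → v ≠ w →
      (starSub S v).edgeSet ∩ (starSub S w).edgeSet = ∅ := by
    intro v w hv hw hvw
    apply Set.eq_empty_iff_forall_notMem.2
    intro e he
    induction e with
    | _ x y =>
      obtain ⟨h1, h2⟩ := he
      rw [SimpleGraph.Subgraph.mem_edgeSet] at h1 h2
      rcases h1 with ⟨rfl, hyS, -⟩ | ⟨rfl, hxS, -⟩ <;>
        rcases h2 with ⟨h, h', -⟩ | ⟨h, h', -⟩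
      · exact hvw h
      · exact hw (h ▸ hyS)
      · exact hw (h ▸ hxS)
      · exact hvw h
  have star_ins_edge : ∀ (v : Fin n) (i : ℕ), v ∉ S →
      (starSub S v).edgeSet ∩ (insSub S σ i).edgeSet = ∅ := by
    intro v i hv
    apply Set.eq_empty_iff_forall_notMem.2
    intro e he
    induction e with
    | _ x y =>
      obtain ⟨h1, h2⟩ := he
      rw [SimpleGraph.Subgraph.mem_edgeSet] at h1 h2
      obtain ⟨hx2, hy2, -⟩ := h2
      rcases h1 with ⟨rfl, -, -⟩ | ⟨rfl, -, -⟩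
      · exact hv hx2
      · exact hv hy2
  have star_star_verts : ∀ v w : Fin n, v ∉ S → w ∉ S → v ≠ w →
      (starSub S v).verts ∩ (starSub S w).verts = ↑S := by
    intro v w hv hw hvw
    ext x
    simp only [starSub, Set.mem_inter_iff, Set.mem_insert_iff, Finset.mem_coe]
    constructor
    · rintro ⟨(rfl | h1), (h2 | h2)⟩
      · exact absurd h2 hvw
      · exact absurd h2 hv
      · exact h1
      · exact h1
    · intro hx
      exact ⟨Or.inr hx, Or.inr hx⟩
  have star_ins_verts : ∀ v : Fin n, ∀ i : ℕ,
      (starSub S v).verts ∩ (insSub S σ i).verts = ↑S := by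
    intro v i
    exact Set.inter_eq_self_of_subset_right (Set.subset_insert _ _)
  refine ⟨fun idx => if h : (idx:ℕ) < n - k
    then starSub S ↑(τ ⟨idx, h⟩) else insSub S σ ((idx:ℕ) - (n-k)), ?_, ?_⟩
  · intro idx
    show IsSTree ⊤ (↑S) (if h : (idx:ℕ) < n - k
      then starSub S ↑(τ ⟨idx, h⟩) else insSub S σ ((idx:ℕ) - (n-k)))
    by_cases h : (idx:ℕ) < n-k
    · rw [dif_pos h]
      exact starSub_isSTree S _ (hτS _)
    · rw [dif_neg h]
      exact insSub_isSTree S hk σ _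
  · intro i j hij
    have hvalne : (i:ℕ) ≠ (j:ℕ) := fun h => hij (Fin.ext h)
    by_cases hi : (i:ℕ) < n-k <;> by_cases hj : (j:ℕ) < n-k <;>
      simp only [dif_pos, dif_neg, hi, hj, dite_true, dite_false]
    · have hne : ((τ ⟨i, hi⟩ : Fin n)) ≠ ((τ ⟨j, hj⟩ : Fin n)) :=
        hτne _ _ (fun h => hvalne (show (i:ℕ) = (j:ℕ) from congrArg (fun z : Fin (n-k) => (z : ℕ)) h))
      exact ⟨star_star_edge _ _ (hτS _) (hτS _) hne,
        star_star_verts _ _ (hτS _) (hτS _) hne⟩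
    · exact ⟨star_ins_edge _ _ (hτS _), star_ins_verts _ _⟩
    · refine ⟨?_, ?_⟩
      · rw [Set.inter_comm]
        exact star_ins_edge _ _ (hτS _)
      · rw [Set.inter_comm]
        exact star_ins_verts _ _
    · have hibound : (i:ℕ) < (n-k) + k/2 := i.2
      have hjbound : (j:ℕ) < (n-k) + k/2 := j.2
      refine ⟨ins_ins_edge hk S σ (by omega) (by omega) (by omega), Set.inter_self _⟩

lemma upper_bound {k : ℕ} (hk : 2 ≤ k) (hkn : k ≤ n) (S : Finset (Fin n)) (hS : S.card = k)
    {r : ℕ} (hr : r ∈ {r | ∃ T : Fin r → (⊤ : SimpleGraph (Fin n)).Subgraph,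
      (∀ i, IsSTree ⊤ (↑S : Set (Fin n)) (T i)) ∧ InternallyDisjoint ⊤ (↑S) T}) :
    r ≤ (n - k) + k/2 := by
  classical
  obtain ⟨T, hT, hD⟩ := hr
  set insid : Finset (Fin r) := Finset.univ.filter (fun i => (T i).verts ⊆ ↑S) with hinsid
  -- outside bound
  have hout : (Finset.univ.filter (fun i => ¬ (T i).verts ⊆ ↑S)).card ≤ Sᶜ.card := by
    have hzero : (0 : ℕ) < n := by omega
    refine Finset.card_le_card_of_injOn
      (fun i => if h : ∃ v : Fin n, v ∈ (T i).verts ∧ v ∉ S then h.choose else ⟨0, hzero⟩)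
      ?_ ?_
    · intro i hi
      rw [Finset.mem_coe, Finset.mem_filter] at hi
      have hex : ∃ v : Fin n, v ∈ (T i).verts ∧ v ∉ S := by
        obtain ⟨v, hv1, hv2⟩ := Set.not_subset.1 hi.2
        exact ⟨v, hv1, fun h => hv2 (Finset.mem_coe.2 h)⟩
      simp only [dif_pos hex]
      exact Finset.mem_compl.2 hex.choose_spec.2
    · intro i hi j hj hij
      simp only [Finset.coe_filter, Set.mem_setOf_eq] at hi hj
      have hexi : ∃ v : Fin n, v ∈ (T i).verts ∧ v ∉ S := by
        obtain ⟨v, hv1, hv2⟩ := Set.not_subset.1 hi.2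
        exact ⟨v, hv1, fun h => hv2 (Finset.mem_coe.2 h)⟩
      have hexj : ∃ v : Fin n, v ∈ (T j).verts ∧ v ∉ S := by
        obtain ⟨v, hv1, hv2⟩ := Set.not_subset.1 hj.2
        exact ⟨v, hv1, fun h => hv2 (Finset.mem_coe.2 h)⟩
      simp only [dif_pos hexi, dif_pos hexj] at hij
      by_contra hne
      have hmem : hexi.choose ∈ (T i).verts ∩ (T j).verts := by
        constructor
        · exact hexi.choose_spec.1
        · rw [hij]
          exact hexj.choose_spec.1
      rw [(hD i j hne).2] at hmem
      exact hexi.choose_spec.2 (Finset.mem_coe.1 hmem)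
  -- each inside tree has k-1 edges
  have hedge : ∀ i ∈ insid, ((T i).edgeSet.toFinset).card = k - 1 := by
    intro i hi
    rw [hinsid, Finset.mem_filter] at hi
    have hverts : (T i).verts = ↑S := Set.Subset.antisymm hi.2 (hT i).1
    have hcardV : Fintype.card ↥(T i).verts = k := by
      rw [Fintype.card_congr (Equiv.setCongr hverts)]
      simp [hS]
    have htree := (hT i).2
    have hcount := htree.card_edgeFinset
    rw [hcardV] at hcount
    -- relate ambient edge finset with coe edge finset
    have himg : Sym2.map (Subtype.val) '' (T i).coe.edgeSet = (T i).edgeSet :=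
      SimpleGraph.Subgraph.image_coe_edgeSet_coe _
    have hn1 : (T i).edgeSet.ncard = (T i).coe.edgeSet.ncard := by
      rw [← himg]
      exact Set.ncard_image_of_injective _ (Sym2.map.injective Subtype.val_injective)
    have hn2 : (T i).edgeSet.ncard = (T i).edgeSet.toFinset.card :=
      Set.ncard_eq_toFinset_card' _
    have hn3 : (T i).coe.edgeSet.ncard = (T i).coe.edgeFinset.card :=
      Set.ncard_eq_toFinset_card' _
    omega
  -- inside edge finsets are pairwise disjoint and live in the non-diagonal sym2 of S
  have hdisj : ∀ i ∈ insid, ∀ j ∈ insid, i ≠ j →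
      Disjoint ((T i).edgeSet.toFinset) ((T j).edgeSet.toFinset) := by
    intro i _ j _ hij
    rw [Finset.disjoint_left]
    intro e he1 he2
    rw [Set.mem_toFinset] at he1 he2
    have : e ∈ (T i).edgeSet ∩ (T j).edgeSet := ⟨he1, he2⟩
    rw [(hD i j hij).1] at this
    exact this
  have hsub : insid.biUnion (fun i => (T i).edgeSet.toFinset) ⊆
      S.sym2.filter (fun e => ¬ e.IsDiag) := by
    intro e he
    rw [Finset.mem_biUnion] at he
    obtain ⟨i, hi, hei⟩ := he
    rw [Set.mem_toFinset] at hei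
    rw [hinsid, Finset.mem_filter] at hi
    rw [Finset.mem_filter, Finset.mem_sym2_iff]
    constructor
    · intro a ha
      exact Finset.mem_coe.1 (hi.2 (SimpleGraph.Subgraph.mem_verts_of_mem_edge hei ha))
    · exact SimpleGraph.not_isDiag_of_mem_edgeSet _ ((T i).edgeSet_subset hei)
  -- counting
  have hdiagcard : (S.sym2.filter (fun e => e.IsDiag)).card = k := by
    have himg : S.sym2.filter (fun e => e.IsDiag) = S.image Sym2.diag := by
      ext e
      rw [Finset.mem_filter, Finset.mem_image]
      constructor
      · rintro ⟨he, hdiag⟩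
        obtain ⟨a, rfl⟩ := (⟨_, Sym2.diag_diagElem hdiag⟩ : ∃ a, Sym2.diag a = e)
        refine ⟨a, ?_, rfl⟩
        rw [Finset.mem_sym2_iff] at he
        exact he a (by rw [Sym2.diag]; simp)
      · rintro ⟨a, ha, rfl⟩
        refine ⟨?_, Sym2.diag_isDiag a⟩
        rw [Finset.mem_sym2_iff]
        intro b hb
        rw [Sym2.diag] at hb
        rcases Sym2.mem_iff.1 hb with rfl | rfl <;> exact ha
    rw [himg, Finset.card_image_of_injective _ Sym2.diag_injective, hS]
  have hsym2card : S.sym2.card = (k+1).choose 2 := by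
    rw [Finset.card_sym2, hS]
  have hFcard : (S.sym2.filter (fun e => ¬ e.IsDiag)).card = (k+1).choose 2 - k := by
    have := Finset.card_filter_add_card_filter_not
      (s := S.sym2) (p := fun e => e.IsDiag)
    omega
  have hsum : insid.card * (k - 1) ≤ (k+1).choose 2 - k := by
    have h1 : (insid.biUnion (fun i => (T i).edgeSet.toFinset)).card =
        ∑ i ∈ insid, ((T i).edgeSet.toFinset).card := Finset.card_biUnion hdisj
    have h2 : ∑ i ∈ insid, ((T i).edgeSet.toFinset).card = insid.card * (k - 1) := by
      rw [Finset.sum_congr rfl hedge, Finset.sum_const, smul_eq_mul]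
    have h3 := Finset.card_le_card hsub
    rw [hFcard] at h3
    omega
  -- conclude insid.card ≤ k/2
  have hinside : insid.card ≤ k / 2 := by
    have hchoose : (k+1).choose 2 = (k+1) * k / 2 := by
      rw [Nat.choose_two_right]
      simp
    obtain ⟨D, hD2⟩ := (Nat.even_mul_succ_self k)
    have hP : k * (k+1) = 2 * D := by omega
    have hPk : (k+1) * k = 2 * D := by rw [Nat.mul_comm] at hP; exact hP
    have hdiv : (k+1) * k / 2 = D := by omega
    have hkk : k * (k - 1) + k = k * k := by
      have h0 : k - 1 + 1 = k := by omega
      calc k * (k - 1) + k = k * ((k - 1) + 1) := (Nat.mul_succ k (k - 1)).symm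
        _ = k * k := by rw [h0]
    have hB : k * k + k = 2 * D := by
      have : (k+1) * k = k * k + k := by ring
      omega
    have hmul : (2 * insid.card) * (k - 1) ≤ k * (k - 1) := by
      have e1 : (2 * insid.card) * (k - 1) = 2 * (insid.card * (k - 1)) := by ring
      rw [hchoose, hdiv] at hsum
      omega
    have := Nat.le_of_mul_le_mul_right hmul (show 0 < k - 1 by omega)
    omega
  have hcompl : Sᶜ.card = n - k := by
    rw [Finset.card_compl, hS, Fintype.card_fin]
  have hsplit := Finset.card_filter_add_card_filter_not
    (s := (Finset.univ : Finset (Fin r))) (p := fun i => (T i).verts ⊆ ↑S)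
  have hcardr : (Finset.univ : Finset (Fin r)).card = r := by simp
  have hgg : insid.card = (Finset.univ.filter (fun i => (T i).verts ⊆ ↑S)).card := by
    rw [hinsid]
  omega

end Aux

theorem gencon_completeGraph (n k : ℕ) (hk : 2 ≤ k) (hkn : k ≤ n) :
    gencon (⊤ : SimpleGraph (Fin n)) k = n - (k + 1) / 2 := by
  have key : ∀ S : Finset (Fin n), S.card = k →
      maxSTrees (⊤ : SimpleGraph (Fin n)) (↑S) = (n - k) + k/2 := by
    intro S hS
    have hgt : IsGreatest {r | ∃ T : Fin r → (⊤ : SimpleGraph (Fin n)).Subgraph,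
        (∀ i, IsSTree ⊤ (↑S : Set (Fin n)) (T i)) ∧ InternallyDisjoint ⊤ (↑S) T}
        ((n - k) + k/2) :=
      ⟨lower_bound hk hkn S hS, fun r hr => upper_bound hk hkn S hS hr⟩
    exact hgt.csSup_eq
  have himg : ((fun S : Finset (Fin n) => maxSTrees ⊤ (↑S : Set (Fin n))) '' {S | S.card = k})
      = {(n - k) + k/2} := by
    apply Set.eq_singleton_iff_unique_mem.2
    constructor
    · obtain ⟨S₀, _, hS₀⟩ := Finset.exists_subset_card_eq
        (show k ≤ (Finset.univ : Finset (Fin n)).card by simp [hkn])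
      exact ⟨S₀, hS₀, key S₀ hS₀⟩
    · rintro y ⟨S, hS, rfl⟩
      exact key S hS
  rw [gencon, himg, csInf_singleton]
  omega
end

section
/- Let G be a connected graph with minimum degree δ. If G contains two adjacent vertices each of degree δ, then the generalized 3-connectivity of G satisfies κ_3(G) ≤ δ − 1. -/
open SimpleGraph Finset

private lemma walk_aux {W : Type*} (H : SimpleGraph W) (y : W) {z x : W} (p : H.Walk z x) :
    z ≠ x → z ≠ y → ∃ u v, H.Adj u v ∧ (v = x ∨ v = y) ∧ u ≠ x ∧ u ≠ y := by
  induction p with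
  | nil => intro hz _; exact absurd rfl hz
  | cons h q ih =>
    intro hz hz'
    rename_i a b c
    by_cases hb : b = c
    · exact ⟨a, b, h, Or.inl hb, hz, hz'⟩
    · by_cases hb' : b = y
      · exact ⟨a, b, h, Or.inr hb', hz, hz'⟩
      · exact ih hb hb'

private lemma two_edges {V : Type*} {G : SimpleGraph V} (Γ : G.Subgraph)
    (hconn : Γ.coe.Connected) {x y z : V} (hxm : x ∈ Γ.verts) (hym : y ∈ Γ.verts)
    (hzm : z ∈ Γ.verts) (hxy : x ≠ y) (hzx : z ≠ x) (hzy : z ≠ y) :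
    ∃ e₁ e₂ : Sym2 V, e₁ ≠ e₂ ∧ e₁ ∈ Γ.edgeSet ∧ e₂ ∈ Γ.edgeSet ∧
      (x ∈ e₁ ∨ y ∈ e₁) ∧ (x ∈ e₂ ∨ y ∈ e₂) := by
  -- edge from walk z → x, entering {x,y}
  obtain ⟨p⟩ := hconn.preconnected ⟨z, hzm⟩ ⟨x, hxm⟩
  obtain ⟨u, v, huv, hv, hux, huy⟩ := walk_aux Γ.coe ⟨y, hym⟩ p
    (fun h => hzx (congrArg Subtype.val h)) (fun h => hzy (congrArg Subtype.val h))
  have huvx : (u : V) ≠ x := fun h => hux (Subtype.ext h)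
  have huvy : (u : V) ≠ y := fun h => huy (Subtype.ext h)
  have he1 : s((u : V), (v : V)) ∈ Γ.edgeSet := SimpleGraph.Subgraph.mem_edgeSet.mpr huv
  have hv' : (v : V) = x ∨ (v : V) = y := by
    rcases hv with h | h
    · exact Or.inl (congrArg Subtype.val h)
    · exact Or.inr (congrArg Subtype.val h)
  -- neighbor of x
  obtain ⟨px⟩ := hconn.preconnected ⟨x, hxm⟩ ⟨y, hym⟩
  obtain ⟨a, ha⟩ : ∃ a : Γ.verts, Γ.coe.Adj ⟨x, hxm⟩ a := by
    cases px with
    | nil => exact absurd rfl hxy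
    | cons h q => exact ⟨_, h⟩
  obtain ⟨py⟩ := hconn.preconnected ⟨y, hym⟩ ⟨x, hxm⟩
  obtain ⟨b, hb⟩ : ∃ b : Γ.verts, Γ.coe.Adj ⟨y, hym⟩ b := by
    cases py with
    | nil => exact absurd rfl (Ne.symm hxy)
    | cons h q => exact ⟨_, h⟩
  have hea : s(x, (a : V)) ∈ Γ.edgeSet := SimpleGraph.Subgraph.mem_edgeSet.mpr ha
  have heb : s(y, (b : V)) ∈ Γ.edgeSet := SimpleGraph.Subgraph.mem_edgeSet.mpr hb
  by_cases hab : s(x, (a : V)) = s(y, (b : V))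
  · rcases Sym2.eq_iff.mp hab with ⟨h1, _⟩ | ⟨_, hay⟩
    · exact absurd h1 hxy
    · refine ⟨s((u : V), (v : V)), s(x, (a : V)), ?_, he1, hea, ?_, Or.inl (Sym2.mem_mk_left _ _)⟩
      · intro h
        rw [hay] at h
        rcases Sym2.eq_iff.mp h with ⟨hu1, _⟩ | ⟨hu1, _⟩
        · exact huvx hu1
        · exact huvy hu1
      · rcases hv' with h | h
        · exact Or.inl (h ▸ Sym2.mem_mk_right _ _)
        · exact Or.inr (h ▸ Sym2.mem_mk_right _ _)
  · exact ⟨s(x, (a : V)), s(y, (b : V)), hab, hea, heb,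
      Or.inl (Sym2.mem_mk_left _ _), Or.inr (Sym2.mem_mk_left _ _)⟩

theorem gencon_three_le_of_adj_minDegree {V : Type*} [Fintype V] (G : SimpleGraph V)
    [DecidableRel G.Adj] (hG : G.Connected) (x y : V) (hxy : G.Adj x y)
    (hx : G.degree x = G.minDegree) (hy : G.degree y = G.minDegree) :
    gencon G 3 ≤ G.minDegree - 1 := by
  classical
  have hxye : x ≠ y := hxy.ne
  by_cases hcard : 3 ≤ Fintype.card V
  swap
  · have hempty : {S : Finset V | S.card = 3} = ∅ := by
      ext S
      simp only [Set.mem_setOf_eq, Set.mem_empty_iff_false, iff_false]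
      intro h
      have := Finset.card_le_univ S
      omega
    rw [gencon, hempty, Set.image_empty, Nat.sInf_empty]
    exact Nat.zero_le _
  · obtain ⟨z, hzx, hzy⟩ : ∃ z, z ≠ x ∧ z ≠ y := by
      by_contra hc
      push_neg at hc
      have hsub : (Finset.univ : Finset V) ⊆ {x, y} := by
        intro v _
        by_cases h : v = x
        · simp [h]
        · simp [hc v h]
      have h2 := Finset.card_le_card hsub
      rw [Finset.card_univ] at h2
      have h3 : ({x, y} : Finset V).card ≤ 2 := by
        apply le_trans (Finset.card_insert_le _ _)
        simp
      omega
    set S : Finset V := {x, y, z} with hSdef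
    have hS3 : S.card = 3 := Finset.card_eq_three.mpr ⟨x, y, z, hxye, Ne.symm hzx, Ne.symm hzy, rfl⟩
    have hxS : x ∈ (S : Set V) := by simp [hSdef]
    have hyS : y ∈ (S : Set V) := by simp [hSdef]
    have hzS : z ∈ (S : Set V) := by simp [hSdef]
    refine le_trans (Nat.sInf_le ⟨S, hS3, rfl⟩) ?_
    have hδ : 1 ≤ G.minDegree := by
      rw [← hx]
      exact (G.degree_pos_iff_exists_adj x).mpr ⟨y, hxy⟩
    -- the incidence finset B
    set B : Finset (Sym2 V) := G.incidenceFinset x ∪ G.incidenceFinset y with hBdef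
    have hBcard : B.card = 2 * G.minDegree - 1 := by
      have hi : G.incidenceFinset x ∩ G.incidenceFinset y = {s(x, y)} := by
        ext e
        simp only [Finset.mem_inter, mem_incidenceFinset, Finset.mem_singleton]
        constructor
        · intro ⟨h1, h2⟩
          have := G.incidenceSet_inter_incidenceSet_of_adj hxy
          have : e ∈ ({s(x, y)} : Set (Sym2 V)) := this ▸ ⟨h1, h2⟩
          simpa using this
        · rintro rfl
          exact ⟨G.mk'_mem_incidenceSet_left_iff.2 hxy, G.mk'_mem_incidenceSet_right_iff.2 hxy⟩
      have hcu := Finset.card_union_add_card_inter (G.incidenceFinset x) (G.incidenceFinset y)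
      rw [hi, Finset.card_singleton, G.card_incidenceFinset_eq_degree,
        G.card_incidenceFinset_eq_degree, hx, hy] at hcu
      rw [hBdef]
      omega
    unfold maxSTrees
    have h0mem : (0 : ℕ) ∈ {r | ∃ T : Fin r → G.Subgraph,
        (∀ i, IsSTree G (↑S) (T i)) ∧ InternallyDisjoint G (↑S) T} :=
      ⟨Fin.elim0, fun i => i.elim0, fun i j _ => i.elim0⟩
    apply csSup_le ⟨0, h0mem⟩
    rintro r ⟨T, hT, hID⟩
    -- each tree contains two distinct edges from B
    have key : ∀ i : Fin r, ∃ e₁ e₂ : Sym2 V, e₁ ≠ e₂ ∧ e₁ ∈ (T i).edgeSet ∧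
        e₂ ∈ (T i).edgeSet ∧ e₁ ∈ B ∧ e₂ ∈ B := by
      intro i
      obtain ⟨hSsub, htree⟩ := hT i
      obtain ⟨e₁, e₂, hne, h1, h2, hm1, hm2⟩ := two_edges (T i) htree.isConnected
        (hSsub hxS) (hSsub hyS) (hSsub hzS) hxye hzx hzy
      have hBmem : ∀ e : Sym2 V, e ∈ (T i).edgeSet → (x ∈ e ∨ y ∈ e) → e ∈ B := by
        intro e he hm
        have heG : e ∈ G.edgeSet := (T i).edgeSet_subset he
        rw [hBdef, Finset.mem_union, mem_incidenceFinset, mem_incidenceFinset]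
        rcases hm with hm | hm
        · exact Or.inl ⟨heG, hm⟩
        · exact Or.inr ⟨heG, hm⟩
      exact ⟨e₁, e₂, hne, h1, h2, hBmem e₁ h1 hm1, hBmem e₂ h2 hm2⟩
    choose E1 E2 hEne hE1m hE2m hE1B hE2B using key
    have hdisj : ∀ (e : Sym2 V) (i j : Fin r), e ∈ (T i).edgeSet → e ∈ (T j).edgeSet → i = j := by
      intro e i j hi hj
      by_contra hijne
      have h0 := (hID i j hijne).1
      have : e ∈ ((T i).edgeSet ∩ (T j).edgeSet) := ⟨hi, hj⟩
      rw [h0] at this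
      exact this
    have hinj : Function.Injective (fun p : Fin r × Fin 2 =>
        (if p.2 = 0 then ⟨E1 p.1, hE1B p.1⟩ else ⟨E2 p.1, hE2B p.1⟩ : {e // e ∈ B})) := by
      rintro ⟨i, k⟩ ⟨j, l⟩ h
      simp only at h
      by_cases hk : k = 0 <;> by_cases hl : l = 0 <;> simp only [hk, hl, if_pos, if_neg,
        reduceIte] at h <;> have hval := congrArg Subtype.val h <;> simp only at hval
      · have := hdisj _ i j (hE1m i) (hval ▸ hE1m j)
        exact Prod.ext this (hk.trans hl.symm)
      · exfalso
        have hij := hdisj _ i j (hE1m i) (hval ▸ hE2m j)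
        subst hij
        exact hEne i hval
      · exfalso
        have hij := hdisj _ i j (hE2m i) (hval ▸ hE1m j)
        subst hij
        exact hEne i hval.symm
      · have hij := hdisj _ i j (hE2m i) (hval ▸ hE2m j)
        refine Prod.ext hij ?_
        show k = l
        have hk' : k.val ≠ 0 := fun h => hk (Fin.ext h)
        have hl' : l.val ≠ 0 := fun h => hl (Fin.ext h)
        have hk2 := k.isLt
        have hl2 := l.isLt
        exact Fin.ext (by omega)
    have hcount := Fintype.card_le_of_injective _ hinj
    rw [Fintype.card_prod, Fintype.card_fin, Fintype.card_fin, Fintype.card_coe, hBcard] at hcount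
    omega
end

section
/- For n ≥ 2, the diameter of the folded hypercube FQ_n equals ⌈n/2⌉. -/
open SimpleGraph Finset

namespace FQaux
open SimpleGraph Finset

variable {n : ℕ}

def H (x y : Fin n → Bool) : ℕ := (Finset.univ.filter fun i => x i ≠ y i).card

lemma H_le (x y : Fin n → Bool) : H x y ≤ n := by
  simpa [H] using Finset.card_filter_le Finset.univ (fun i => x i ≠ y i)

lemma H_eq_zero {x y : Fin n → Bool} (h : H x y = 0) : x = y := by
  funext i
  by_contra hi
  have hmem : i ∈ Finset.univ.filter fun i => x i ≠ y i := by simp [hi]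
  rw [H, Finset.card_eq_zero] at h
  simp [h] at hmem

lemma exists_walk_hamming : ∀ (k : ℕ) (x y : Fin n → Bool), H x y = k →
    ∃ p : (FQ n).Walk x y, p.length = k := by
  intro k
  induction k with
  | zero =>
    intro x y h
    obtain rfl := H_eq_zero h
    exact ⟨SimpleGraph.Walk.nil, rfl⟩
  | succ k ih =>
    intro x y h
    have hne : (Finset.univ.filter fun i => x i ≠ y i).Nonempty :=
      Finset.card_pos.mp (by rw [← H, h]; omega)
    obtain ⟨i, hi⟩ := hne
    have hxy : x i ≠ y i := by simpa using hi
    set x' := Function.update x i (y i) with hx'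
    have hfil : (Finset.univ.filter fun j => x j ≠ x' j) = {i} := by
      ext j
      by_cases hj : j = i <;> simp [hx', Function.update_apply, hj, hxy]
    have hadj : (FQ n).Adj x x' := by
      refine ⟨?_, Or.inl (by rw [hfil]; simp)⟩
      intro he
      apply hxy
      have := congrFun he i
      simpa [hx'] using this
    have hH : H x' y = k := by
      have hset : (Finset.univ.filter fun j => x' j ≠ y j)
          = (Finset.univ.filter fun j => x j ≠ y j).erase i := by
        ext j
        by_cases hj : j = i <;> simp [hx', Function.update_apply, hj]
      rw [H, hset, Finset.card_erase_of_mem hi, ← H, h]; omega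
    obtain ⟨p, hp⟩ := ih x' y hH
    exact ⟨SimpleGraph.Walk.cons hadj p, by simp [hp]⟩

lemma adj_compl (hn : 1 ≤ n) (x : Fin n → Bool) : (FQ n).Adj x (fun i => !x i) := by
  refine ⟨?_, Or.inr fun i => by simp⟩
  intro he
  have := congrFun he ⟨0, hn⟩
  simp at this

lemma H_compl (x y : Fin n → Bool) : H (fun i => !x i) y = n - H x y := by
  have hset : (Finset.univ.filter fun j => (!x j) ≠ y j)
      = Finset.univ \ (Finset.univ.filter fun j => x j ≠ y j) := by
    rw [← Finset.filter_not]
    ext j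
    simp only [Finset.mem_filter, Finset.mem_univ, true_and]
    cases hx : x j <;> cases hy : y j <;> simp
  rw [H, hset, Finset.card_sdiff_of_subset (Finset.filter_subset _ _), ← H]
  simp

lemma length_lower {y : Fin n → Bool} : ∀ {x : Fin n → Bool} (p : (FQ n).Walk x y),
    min (H x y) (n + 1 - H x y) ≤ p.length := by
  intro x p
  induction p with
  | nil => simp [H]
  | @cons x z y h p ih =>
    have hbz : H z y ≤ n := H_le z y
    have hbx : H x y ≤ n := H_le x y
    rcases h.2 with h1 | h2
    · obtain ⟨i, hi⟩ := Finset.card_eq_one.mp h1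
      have heq : ∀ j, j ≠ i → x j = z j := by
        intro j hj
        by_contra hc
        have : j ∈ (Finset.univ.filter fun j => x j ≠ z j) := by simp [hc]
        rw [hi] at this
        exact hj (by simpa using this)
      have h1' : H x y ≤ H z y + 1 := by
        have hsub : (Finset.univ.filter fun j => x j ≠ y j)
            ⊆ insert i (Finset.univ.filter fun j => z j ≠ y j) := by
          intro j hj
          simp only [Finset.mem_filter, Finset.mem_univ, true_and] at hj
          by_cases hji : j = i
          · simp [hji]
          · simp only [Finset.mem_insert, Finset.mem_filter, Finset.mem_univ, true_and]
            exact Or.inr (by rw [← heq j hji]; exact hj)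
        calc H x y ≤ (insert i (Finset.univ.filter fun j => z j ≠ y j)).card :=
              Finset.card_le_card hsub
          _ ≤ H z y + 1 := Finset.card_insert_le _ _
      have h2' : H z y ≤ H x y + 1 := by
        have hsub : (Finset.univ.filter fun j => z j ≠ y j)
            ⊆ insert i (Finset.univ.filter fun j => x j ≠ y j) := by
          intro j hj
          simp only [Finset.mem_filter, Finset.mem_univ, true_and] at hj
          by_cases hji : j = i
          · simp [hji]
          · simp only [Finset.mem_insert, Finset.mem_filter, Finset.mem_univ, true_and]
            exact Or.inr (by rw [heq j hji]; exact hj)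
        calc H z y ≤ (insert i (Finset.univ.filter fun j => x j ≠ y j)).card :=
              Finset.card_le_card hsub
          _ ≤ H x y + 1 := Finset.card_insert_le _ _
      simp only [SimpleGraph.Walk.length_cons]
      omega
    · have hx : x = fun i => !z i := funext h2
      have : H x y = n - H z y := by rw [hx, H_compl]
      simp only [SimpleGraph.Walk.length_cons]
      omega

end FQaux

theorem FQ_diam (n : ℕ) (hn : 2 ≤ n) : (FQ n).diam = (n + 1) / 2 := by
  classical
  open FQaux in
  -- upper bound on all distances
  have hwalks : ∀ x y : Fin n → Bool, ∃ p : (FQ n).Walk x y, p.length ≤ (n + 1) / 2 := by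
    intro x y
    have hb : H x y ≤ n := H_le x y
    by_cases hc : H x y ≤ (n + 1) / 2
    · obtain ⟨p, hp⟩ := exists_walk_hamming (H x y) x y rfl
      exact ⟨p, by omega⟩
    · obtain ⟨p, hp⟩ := exists_walk_hamming (H (fun i => !x i) y) (fun i => !x i) y rfl
      refine ⟨SimpleGraph.Walk.cons (adj_compl (by omega) x) p, ?_⟩
      have := H_compl x y
      simp only [SimpleGraph.Walk.length_cons]
      omega
  have hdist : ∀ x y : Fin n → Bool, (FQ n).dist x y ≤ (n + 1) / 2 := by
    intro x y
    obtain ⟨p, hp⟩ := hwalks x y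
    exact le_trans (SimpleGraph.dist_le p) hp
  have hediam : (FQ n).ediam ≤ ((n + 1) / 2 : ℕ) := by
    apply SimpleGraph.ediam_le_of_edist_le
    intro u v
    obtain ⟨p, hp⟩ := hwalks u v
    exact le_trans (SimpleGraph.edist_le p) (by exact_mod_cast hp)
  have hne : (FQ n).ediam ≠ ⊤ :=
    ne_top_of_le_ne_top (by simp) hediam
  -- lower bound pair
  set x0 : Fin n → Bool := fun _ => false with hx0
  set y0 : Fin n → Bool := fun i => decide (i.1 < (n + 1) / 2) with hy0
  have hH0 : H x0 y0 = (n + 1) / 2 := by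
    have hset : (Finset.univ.filter fun i => x0 i ≠ y0 i)
        = Finset.Iio (⟨(n + 1) / 2, by omega⟩ : Fin n) := by
      ext j
      simp [hx0, hy0, Fin.lt_def]
    rw [H, hset, Fin.card_Iio]
  have hlow : (n + 1) / 2 ≤ (FQ n).dist x0 y0 := by
    obtain ⟨p, hp⟩ := hwalks x0 y0
    obtain ⟨q, hq⟩ := (p.reachable).exists_walk_length_eq_dist
    have := length_lower q
    rw [hq, hH0] at this
    omega
  refine le_antisymm ?_ ?_
  · obtain ⟨u, v, huv⟩ := (FQ n).exists_dist_eq_diam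
    rw [← huv]
    exact hdist u v
  · exact le_trans hlow (SimpleGraph.dist_le_diam hne)
end

section
/- For n ≥ 2, the (vertex) connectivity of the folded hypercube FQ_n equals n + 1. -/
open SimpleGraph Finset

-- §1 flip and set-adjacency
variable {n : ℕ}

def flipOn (u : Fin n → Bool) (S : Finset (Fin n)) : Fin n → Bool :=
  fun i => if i ∈ S then !(u i) else u i

def AdjSets (S T : Finset (Fin n)) : Prop :=
  (symmDiff S T).card = 1 ∨ symmDiff S T = Finset.univ

lemma flipOn_empty (u : Fin n → Bool) : flipOn u ∅ = u := by
  funext i; simp [flipOn]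

lemma flipOn_injective (u : Fin n → Bool) : Function.Injective (flipOn u) := by
  intro S T h
  ext i
  by_contra hc
  have := congrFun h i
  rcases Classical.em (i ∈ S) with hS | hS <;> rcases Classical.em (i ∈ T) with hT | hT <;>
    simp [flipOn, hS, hT] at this hc <;> tauto

lemma flipOn_diff (u : Fin n → Bool) (S T : Finset (Fin n)) :
    (Finset.univ.filter fun i => flipOn u S i ≠ flipOn u T i) = symmDiff S T := by
  ext i
  simp only [Finset.mem_filter, Finset.mem_univ, true_and, Finset.mem_symmDiff]
  rcases Classical.em (i ∈ S) with hS | hS <;> rcases Classical.em (i ∈ T) with hT | hT <;>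
    simp [flipOn, hS, hT]

lemma adj_flipOn {u : Fin n → Bool} {S T : Finset (Fin n)} (hn : 1 ≤ n) (h : AdjSets S T) :
    (FQ n).Adj (flipOn u S) (flipOn u T) := by
  have hne : (symmDiff S T).Nonempty := by
    rcases h with h | h
    · exact Finset.card_pos.mp (by omega)
    · rw [h]; exact ⟨⟨0, hn⟩, Finset.mem_univ _⟩
  obtain ⟨i, hi⟩ := hne
  have hdiff : flipOn u S i ≠ flipOn u T i := by
    rw [Finset.mem_symmDiff] at hi
    rcases hi with ⟨h1, h2⟩ | ⟨h1, h2⟩ <;> simp [flipOn, h1, h2] <;> cases u i <;> simp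
  constructor
  · intro hc; exact hdiff (congrFun hc i)
  · rcases h with h | h
    · left; rw [flipOn_diff]; exact h
    · right
      intro j
      have hj : j ∈ symmDiff S T := h ▸ Finset.mem_univ j
      rw [Finset.mem_symmDiff] at hj
      rcases hj with ⟨h1, h2⟩ | ⟨h1, h2⟩ <;> simp [flipOn, h1, h2]

-- §2 cum
def cum (B : Finset (Fin n)) : List (Fin n) → List (Finset (Fin n))
  | [] => [B]
  | a :: t => B :: cum (insert a B) t

lemma cum_ne_nil (B : Finset (Fin n)) (t : List (Fin n)) : cum B t ≠ [] := by
  cases t <;> simp [cum]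

lemma cum_head (B : Finset (Fin n)) (t : List (Fin n)) :
    (cum B t).head (cum_ne_nil B t) = B := by
  cases t <;> simp [cum]

lemma cum_getLast (B : Finset (Fin n)) (t : List (Fin n)) :
    (cum B t).getLast (cum_ne_nil B t) = B ∪ t.toFinset := by
  induction t generalizing B with
  | nil => simp [cum]
  | cons a t ih =>
    show (B :: cum (insert a B) t).getLast (by simp) = _
    rw [List.getLast_cons (cum_ne_nil _ t), ih]
    ext x; simp [Finset.mem_insert]

lemma cum_chain' (B : Finset (Fin n)) (t : List (Fin n)) (hnd : t.Nodup)
    (hdisj : ∀ a ∈ t, a ∉ B) : List.Chain' AdjSets (cum B t) := by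
  induction t generalizing B with
  | nil => exact List.isChain_singleton _
  | cons a t ih =>
    show List.Chain' AdjSets (B :: cum (insert a B) t)
    refine List.IsChain.cons (ih _ (hnd.of_cons) ?_) ?_
    · intro b hb
      simp only [Finset.mem_insert]
      push_neg
      exact ⟨(List.nodup_cons.mp hnd).1 ∘ fun h => h ▸ hb, hdisj b (List.mem_cons_of_mem a hb)⟩
    · intro y hy
      have : y = insert a B := by
        have := cum_head (insert a B) t
        rw [List.head?_eq_head (cum_ne_nil _ _), this] at hy
        exact (Option.some_inj.mp hy).symm
      subst this
      left
      have ha : a ∉ B := hdisj a List.mem_cons_self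
      have : symmDiff B (insert a B) = {a} := by
        ext x
        simp only [Finset.mem_symmDiff, Finset.mem_insert, Finset.mem_singleton]
        constructor
        · rintro (⟨h1, h2⟩ | ⟨h1, h2⟩)
          · tauto
          · rcases h1 with h | h; exact h; tauto
        · rintro rfl; tauto
      rw [this, Finset.card_singleton]

lemma cum_mem {B X : Finset (Fin n)} {t : List (Fin n)} (h : X ∈ cum B t) :
    ∃ s, X = B ∪ (t.take s).toFinset := by
  induction t generalizing B with
  | nil =>
    refine ⟨0, ?_⟩
    simp [cum] at h
    simp [h]
  | cons a t ih =>
    rw [show cum B (a :: t) = B :: cum (insert a B) t from rfl, List.mem_cons] at h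
    rcases h with rfl | h
    · exact ⟨0, by simp⟩
    · obtain ⟨s, rfl⟩ := ih h
      refine ⟨s + 1, ?_⟩
      ext x; simp [Finset.mem_insert]

-- §3 reachability from chains
lemma reachable_of_chain' {V : Type*} (G : SimpleGraph V) (s : Set V) :
    ∀ (L : List V) (a b : V) (ha : a ∈ s) (hb : b ∈ s),
      List.Chain G.Adj a L → (∀ x ∈ L, x ∈ s) → (a :: L).getLast (by simp) = b →
      (G.induce s).Reachable ⟨a, ha⟩ ⟨b, hb⟩ := by
  intro L
  induction L with
  | nil =>
    intro a b ha hb _ _ hlast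
    simp at hlast
    subst hlast
    rfl
  | cons c L ih =>
    intro a b ha hb hc hmem hlast
    have hadj : (G.induce s).Adj ⟨a, ha⟩ ⟨c, hmem c (by simp)⟩ := (List.chain_cons.mp hc).1
    refine hadj.reachable.trans (ih c b (hmem c (by simp)) hb (List.chain_cons.mp hc).2
      (fun x hx => hmem x (List.mem_cons_of_mem c hx)) ?_)
    rw [← hlast, List.getLast_cons (by simp : (c :: L) ≠ [])]

-- §4 pigeonhole
lemma paths_length_le {V : Type*} [DecidableEq V] (u v : V) (W : Finset V)
    (hu : u ∉ W) (hv : v ∉ W) :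
    ∀ (paths : List (List V)),
      paths.Pairwise (fun L L' => ∀ x ∈ L, x ∈ L' → x = u ∨ x = v) →
      (∀ L ∈ paths, ∃ x ∈ L, x ∈ W) → paths.length ≤ W.card := by
  intro paths
  induction paths generalizing W with
  | nil => intro _ _; simp
  | cons L rest ih =>
    intro hpw hhit
    obtain ⟨w, hwL, hwW⟩ := hhit L (by simp)
    have hwu : w ≠ u := fun h => hu (h ▸ hwW)
    have hwv : w ≠ v := fun h => hv (h ▸ hwW)
    have hrest : ∀ L' ∈ rest, ∃ x ∈ L', x ∈ W.erase w := by
      intro L' hL'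
      obtain ⟨x, hxL', hxW⟩ := hhit L' (List.mem_cons_of_mem _ hL')
      refine ⟨x, hxL', Finset.mem_erase.mpr ⟨?_, hxW⟩⟩
      rintro rfl
      rcases (List.pairwise_cons.mp hpw).1 L' hL' x hwL hxL' with h | h
      · exact hwu h
      · exact hwv h
    have := ih (W.erase w) (fun h => hu (Finset.mem_of_mem_erase h))
      (fun h => hv (Finset.mem_of_mem_erase h)) (List.pairwise_cons.mp hpw).2 hrest
    have hcard : (W.erase w).card + 1 = W.card := Finset.card_erase_add_one hwW
    simp only [List.length_cons]
    omega

-- §5 cyclic intervals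
lemma mem_rotate_take {l : List (Fin n)} {j s : ℕ} (hs : s ≤ l.length) {x : Fin n} :
    x ∈ ((l.rotate j).take s).toFinset ↔
      ∃ p, ∃ (h : p < s), l[(p + j) % l.length]'(Nat.mod_lt _ (by omega)) = x := by
  rw [List.mem_toFinset, List.mem_iff_getElem]
  constructor
  · rintro ⟨p, hp, rfl⟩
    have hp' : p < s := by
      simp [List.length_take, List.length_rotate] at hp
      omega
    refine ⟨p, hp', ?_⟩
    rw [List.getElem_take, List.getElem_rotate]
  · rintro ⟨p, hp, rfl⟩
    have hlen : p < ((l.rotate j).take s).length := by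
      simp [List.length_take, List.length_rotate]; omega
    refine ⟨p, hlen, ?_⟩
    rw [List.getElem_take, List.getElem_rotate]

lemma rotate_take_trichotomy (l : List (Fin n)) (hnd : l.Nodup) {j j' s s' : ℕ}
    (hj : j < l.length) (hj' : j' < l.length) (hjj : j ≠ j')
    (h : ((l.rotate j).take s).toFinset = ((l.rotate j').take s').toFinset) :
    ((l.rotate j).take s).toFinset = ∅ ∨ ((l.rotate j).take s).toFinset = l.toFinset := by
  set k := l.length with hk
  have hrot : ∀ (j : ℕ), (l.rotate j).toFinset = l.toFinset := by
    intro j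
    ext x; simp [List.mem_rotate]
  -- reduce to 0 < s < k etc.
  rcases Nat.eq_zero_or_pos s with rfl | hs0
  · left; simp
  rcases le_or_gt k s with hks | hsk
  · right; rw [List.take_of_length_le (by simpa using hks), hrot]
  rcases Nat.eq_zero_or_pos s' with rfl | hs0'
  · left; rw [h]; simp
  rcases le_or_gt k s' with hks' | hsk'
  · right; rw [h, List.take_of_length_le (by simpa using hks'), hrot]
  exfalso
  -- cards equal
  have hcard : ∀ (j s : ℕ), j < k → s ≤ k → (((l.rotate j).take s).toFinset).card = s := by
    intro j s _ hs
    rw [List.toFinset_card_of_nodup (((List.nodup_rotate).mpr hnd).sublist (List.take_sublist _ _))]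
    simp [List.length_take, List.length_rotate]; omega
  have hss : s = s' := by
    have h1 := hcard j s hj hsk.le
    have h2 := hcard j' s' hj' hsk'.le
    rw [h, h2] at h1; omega
  subst hss
  -- l[j'] ∈ X
  have hj'mem : l[j']'hj' ∈ ((l.rotate j).take s).toFinset := by
    rw [h, mem_rotate_take hsk'.le]
    exact ⟨0, hs0', by congr 1; simpa using Nat.mod_eq_of_lt hj'⟩
  rw [mem_rotate_take hsk.le] at hj'mem
  obtain ⟨p0, hp0s, hp0⟩ := hj'mem
  have hp0j : (p0 + j) % k = j' := by
    have := (hnd.getElem_inj_iff).mp hp0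
    simpa using this
  have hp00 : p0 ≠ 0 := by
    rintro rfl
    rw [Nat.zero_add, Nat.mod_eq_of_lt hj] at hp0j
    exact hjj hp0j
  -- element l[(s+j)%k] ∈ X via the j' description
  have hmem2 : (l[(s + j) % k]'(Nat.mod_lt _ (by omega))) ∈ ((l.rotate j).take s).toFinset := by
    rw [h, mem_rotate_take hsk'.le]
    refine ⟨s - p0, by omega, ?_⟩
    congr 1
    conv_lhs => rw [← hp0j]
    have hmq : ((s - p0) + (p0 + j) % k) % k = ((s - p0) + (p0 + j)) % k :=
      Nat.ModEq.add_left _ (Nat.mod_modEq _ _)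
    rw [show (s - p0) + (p0 + j) = s + j by omega] at hmq
    exact hmq
  rw [mem_rotate_take hsk.le] at hmem2
  obtain ⟨q, hq, hqeq⟩ := hmem2
  have : (q + j) % k = (s + j) % k := (hnd.getElem_inj_iff).mp hqeq
  have : q % k = s % k := Nat.ModEq.add_right_cancel' j this
  rw [Nat.mod_eq_of_lt (by omega), Nat.mod_eq_of_lt hsk] at this
  omega

-- §6 wrappers
lemma rotate_toFinset (l : List (Fin n)) (j : ℕ) : (l.rotate j).toFinset = l.toFinset := by
  ext x; simp [List.mem_rotate]

lemma cum_mem_empty {X : Finset (Fin n)} {t : List (Fin n)} (h : X ∈ cum ∅ t) :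
    ∃ s, X = (t.take s).toFinset := by
  obtain ⟨s, rfl⟩ := cum_mem h
  exact ⟨s, by simp⟩

lemma cum_subset {X : Finset (Fin n)} {t : List (Fin n)} (h : X ∈ cum ∅ t) :
    X ⊆ t.toFinset := by
  obtain ⟨s, rfl⟩ := cum_mem_empty h
  intro x hx
  rw [List.mem_toFinset] at hx ⊢
  exact List.take_subset _ _ hx

lemma reachable_of_chain'' {V : Type*} (G : SimpleGraph V) (s : Set V)
    (L : List V) (hL : L ≠ []) (hc : L.Chain' G.Adj) (hmem : ∀ x ∈ L, x ∈ s)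
    (a b : V) (ha : a ∈ s) (hb : b ∈ s)
    (hhead : L.head hL = a) (hlast : L.getLast hL = b) :
    (G.induce s).Reachable ⟨a, ha⟩ ⟨b, hb⟩ := by
  cases L with
  | nil => exact absurd rfl hL
  | cons c t =>
    rw [List.head_cons] at hhead
    subst hhead
    exact reachable_of_chain' G s t c b ha hb hc
      (fun x hx => hmem x (List.mem_cons_of_mem c hx)) hlast

lemma reach_of_paths {n : ℕ} (hn : 1 ≤ n) (u v : Fin n → Bool)
    (W : Finset (Fin n → Bool)) (hu : u ∉ W) (hv : v ∉ W)
    (D : Finset (Fin n)) (hD : flipOn u D = v)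
    (paths : List (List (Finset (Fin n))))
    (hlen : W.card < paths.length)
    (hB : ∀ L ∈ paths, ∃ hL : L ≠ [],
      L.head hL = ∅ ∧ L.getLast hL = D ∧ List.Chain' AdjSets L)
    (hC : paths.Pairwise (fun L L' => ∀ X ∈ L, X ∈ L' → X = ∅ ∨ X = D)) :
    ((FQ n).induce ((↑W : Set (Fin n → Bool))ᶜ)).Reachable
      ⟨u, by simpa using hu⟩ ⟨v, by simpa using hv⟩ := by
  classical
  -- find a path avoiding W
  have hex : ∃ L ∈ paths, ∀ X ∈ L, flipOn u X ∉ W := by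
    by_contra hno
    push_neg at hno
    have hpw : (paths.map (List.map (flipOn u))).Pairwise
        (fun L L' => ∀ x ∈ L, x ∈ L' → x = u ∨ x = v) := by
      rw [List.pairwise_map]
      refine hC.imp ?_
      intro L L' hLL' x hx hx'
      rw [List.mem_map] at hx hx'
      obtain ⟨X, hX, rfl⟩ := hx
      obtain ⟨X', hX', hXX'⟩ := hx'
      have : X = X' := flipOn_injective u hXX'.symm
      subst this
      rcases hLL' X hX hX' with rfl | rfl
      · left; exact flipOn_empty u
      · right; exact hD
    have hhit : ∀ L ∈ paths.map (List.map (flipOn u)), ∃ x ∈ L, x ∈ W := by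
      intro L hL
      rw [List.mem_map] at hL
      obtain ⟨L', hL', rfl⟩ := hL
      obtain ⟨X, hX, hXW⟩ := hno L' hL'
      exact ⟨flipOn u X, List.mem_map_of_mem hX, hXW⟩
    have := paths_length_le u v W hu hv (paths.map (List.map (flipOn u))) hpw hhit
    rw [List.length_map] at this
    omega
  obtain ⟨L, hLmem, hLavoid⟩ := hex
  obtain ⟨hLne, hhead, hlast, hchain⟩ := hB L hLmem
  refine reachable_of_chain'' (FQ n) _ (L.map (flipOn u))
    (by simpa using hLne) ?_ ?_ u v (by simpa using hu) (by simpa using hv) ?_ ?_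
  · unfold List.Chain'; rw [List.isChain_map]
    exact hchain.imp (fun a b h => adj_flipOn hn h)
  · intro x hx
    rw [List.mem_map] at hx
    obtain ⟨X, hX, rfl⟩ := hx
    simpa using hLavoid X hX
  · rw [List.head_map, hhead, flipOn_empty]
  · rw [List.getLast_map, hlast, hD]

-- §7 small symmDiff helpers
lemma symmDiff_insert' {B : Finset (Fin n)} {a : Fin n} (ha : a ∉ B) :
    symmDiff B (insert a B) = {a} := by
  ext x
  simp only [Finset.mem_symmDiff, Finset.mem_insert, Finset.mem_singleton]
  constructor
  · rintro (⟨h1, h2⟩ | ⟨h1, h2⟩)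
    · tauto
    · rcases h1 with h | h; exact h; tauto
  · rintro rfl; tauto

lemma symmDiff_compl_self' (D : Finset (Fin n)) : symmDiff Dᶜ D = Finset.univ := by
  ext x
  simp only [Finset.mem_symmDiff, Finset.mem_compl, Finset.mem_univ, iff_true]
  tauto

-- §8 main construction
lemma fq_conn_aux {n : ℕ} (hn : 2 ≤ n) (W : Finset (Fin n → Bool)) (hW : W.card ≤ n)
    (u v : Fin n → Bool) (huv : u ≠ v) (hu : u ∉ W) (hv : v ∉ W) :
    ((FQ n).induce ((↑W : Set (Fin n → Bool))ᶜ)).Reachable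
      ⟨u, by simpa using hu⟩ ⟨v, by simpa using hv⟩ := by
  classical
  set D := Finset.univ.filter (fun i => u i ≠ v i) with hDdef
  have hmemD : ∀ i, i ∈ D ↔ u i ≠ v i := by
    intro i; simp [hDdef]
  have hflip : flipOn u D = v := by
    funext i
    by_cases h : u i ≠ v i
    · have : i ∈ D := (hmemD i).mpr h
      simp only [flipOn, this, if_true]
      cases hui : u i <;> cases hvi : v i <;> simp_all
    · have : i ∉ D := fun hc => h ((hmemD i).mp hc)
      simp only [flipOn, this, if_false]
      push_neg at h; exact h
  have hDne : D.Nonempty := by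
    rcases Finset.eq_empty_or_nonempty D with h | h
    · exfalso; apply huv; rw [← hflip, h, flipOn_empty]
    · exact h
  set l := D.sort (· ≤ ·) with hldef
  have hlnd : l.Nodup := D.sort_nodup _
  have hltf : l.toFinset = D := D.sort_toFinset _
  have hlen : l.length = D.card := Finset.length_sort _
  have hk1 : 1 ≤ l.length := by
    rw [hlen]; exact Finset.card_pos.mpr hDne
  -- the cyclic paths
  set cyc := (List.range l.length).map (fun j => cum (∅ : Finset (Fin n)) (l.rotate j))
    with hcycdef
  have hcycB : ∀ L ∈ cyc, ∃ hL : L ≠ [],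
      L.head hL = ∅ ∧ L.getLast hL = D ∧ List.Chain' AdjSets L := by
    intro L hL
    rw [hcycdef, List.mem_map] at hL
    obtain ⟨j, _, rfl⟩ := hL
    refine ⟨cum_ne_nil _ _, cum_head _ _, ?_, ?_⟩
    · rw [cum_getLast, rotate_toFinset, hltf, Finset.empty_union]
    · exact cum_chain' _ _ (List.nodup_rotate.mpr hlnd) (by simp)
  have hcycmem : ∀ L ∈ cyc, ∀ X ∈ L, X ⊆ D := by
    intro L hL X hX
    rw [hcycdef, List.mem_map] at hL
    obtain ⟨j, _, rfl⟩ := hL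
    exact (cum_subset hX).trans (by rw [rotate_toFinset, hltf])
  have hcycpair : cyc.Pairwise (fun L L' => ∀ X ∈ L, X ∈ L' → X = ∅ ∨ X = D) := by
    rw [hcycdef, List.pairwise_map]
    refine (List.pairwise_lt_range).imp_of_mem ?_
    intro j j' hjm hj'm hlt X hX hX'
    rw [List.mem_range] at hjm hj'm
    obtain ⟨s, rfl⟩ := cum_mem_empty hX
    obtain ⟨s', heq⟩ := cum_mem_empty hX'
    rcases rotate_take_trichotomy l hlnd hjm hj'm (Nat.ne_of_lt hlt) heq with h | h
    · left; exact h
    · right; rw [h, hltf]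
  have hcyclen : cyc.length = D.card := by
    rw [hcycdef, List.length_map, List.length_range, hlen]
  have hDcard : D.card ≤ n := by
    have := Finset.card_le_univ D
    simpa using this
  -- case on the size of the complement
  by_cases hm0 : Dᶜ = (∅ : Finset (Fin n))
  · -- D = univ
    have hDuniv : D = Finset.univ := (Finset.compl_eq_empty_iff D).mp hm0
    have hDn : D.card = n := by rw [hDuniv]; simp
    refine reach_of_paths (by omega) u v W hu hv D hflip (cyc ++ [[∅, D]]) ?_ ?_ ?_
    · rw [List.length_append, hcyclen]; simp; omega
    · intro L hL
      rw [List.mem_append] at hL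
      rcases hL with hL | hL
      · exact hcycB L hL
      · simp only [List.mem_singleton] at hL
        subst hL
        refine ⟨by simp, by simp, by simp, ?_⟩
        unfold List.Chain'; rw [List.isChain_pair]
        right
        rw [show (∅ : Finset (Fin n)) = ⊥ from rfl, bot_symmDiff, hDuniv]
    · rw [List.pairwise_append]
      refine ⟨hcycpair, by simp, ?_⟩
      intro L hL L' hL' X hX hX'
      simp only [List.mem_singleton] at hL'
      subst hL'
      simpa using hX'
  by_cases hm1 : Dᶜ.card = 1
  · obtain ⟨i, hi⟩ := Finset.card_eq_one.mp hm1
    have hiD : i ∉ D := by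
      have : i ∈ Dᶜ := by rw [hi]; simp
      simpa using this
    have hDn : D.card = n - 1 := by
      have := Finset.card_compl D
      rw [hm1] at this  -- wrong direction
      simp [Fintype.card_fin] at this
      omega
    refine reach_of_paths (by omega) u v W hu hv D hflip
      (cyc ++ [[∅, {i}, D], [∅, Finset.univ, D]]) ?_ ?_ ?_
    · rw [List.length_append, hcyclen]; simp; omega
    · intro L hL
      rw [List.mem_append] at hL
      rcases hL with hL | hL
      · exact hcycB L hL
      · simp only [List.mem_cons, List.mem_singleton] at hL
        rcases hL with rfl | hL
        · refine ⟨by simp, by simp, by simp, ?_⟩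
          unfold List.Chain'; rw [List.isChain_cons, List.isChain_pair]
          constructor
          · intro y hy
            simp only [List.head?_cons, Option.mem_some_iff] at hy
            subst hy
            left
            rw [show (∅ : Finset (Fin n)) = ⊥ from rfl, bot_symmDiff]
            simp
          · right
            have : symmDiff ({i} : Finset (Fin n)) D = Finset.univ := by
              ext x
              simp only [Finset.mem_symmDiff, Finset.mem_singleton, Finset.mem_univ, iff_true]
              by_cases hx : x ∈ D
              · right; exact ⟨hx, fun h => hiD (h ▸ hx)⟩
              · left
                have : x ∈ Dᶜ := by simpa using hx
                rw [hi] at this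
                simp only [Finset.mem_singleton] at this
                exact ⟨this, hx⟩
            exact this
        · rcases hL with rfl | hL
          · refine ⟨by simp, by simp, by simp, ?_⟩
            unfold List.Chain'; rw [List.isChain_cons, List.isChain_pair]
            constructor
            · intro y hy
              simp only [List.head?_cons, Option.mem_some_iff] at hy
              subst hy
              right
              rw [show (∅ : Finset (Fin n)) = ⊥ from rfl, bot_symmDiff]
            · left
              rw [show (Finset.univ : Finset (Fin n)) = ⊤ from rfl, top_symmDiff]
              show Dᶜ.card = 1
              exact hm1
          · exact absurd hL (by simp)
    · rw [List.pairwise_append]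
      refine ⟨hcycpair, ?_, ?_⟩
      · refine List.Pairwise.cons ?_ (List.Pairwise.cons (fun _ h => absurd h List.not_mem_nil) List.Pairwise.nil)
        intro L' hL'
        simp only [List.mem_singleton] at hL'
        subst hL'
        intro X hX hX'
        simp only [List.mem_cons, List.not_mem_nil, or_false] at hX hX'
        rcases hX with rfl | rfl | rfl
        · left; rfl
        · rcases hX' with h | h | h
          · exact absurd h (by simp)
          · exfalso
            have h2 : Finset.card ({i} : Finset (Fin n)) = n := by rw [h]; simp
            simp at h2
            omega
          · right; exact h
        · right; rfl
      · intro L hL L' hL' X hX hX'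
        have hXD : X ⊆ D := hcycmem L hL X hX
        simp only [List.mem_cons, List.mem_singleton, List.not_mem_nil, or_false] at hL'
        rcases hL' with rfl | rfl
        · simp only [List.mem_cons, List.not_mem_nil, or_false] at hX'
          rcases hX' with rfl | rfl | rfl
          · left; rfl
          · exact absurd (hXD (by simp)) hiD
          · right; rfl
        · simp only [List.mem_cons, List.not_mem_nil, or_false] at hX'
          rcases hX' with rfl | rfl | rfl
          · left; rfl
          · exfalso
            have : D = Finset.univ := Finset.univ_subset_iff.mp (by simpa using hXD)
            rw [← Finset.compl_eq_empty_iff] at this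
            rw [this] at hm1
            simp at hm1
          · right; rfl
  · -- m ≥ 2
    have hm2 : 2 ≤ Dᶜ.card := by
      have h0 : Dᶜ.card ≠ 0 := fun h => hm0 (Finset.card_eq_zero.mp h)
      omega
    have hDcne : (Dᶜ : Finset (Fin n)).Nonempty := Finset.card_pos.mp (by omega)
    set lc := Dᶜ.sort (· ≤ ·) with hlcdef
    have hlcnd : lc.Nodup := Dᶜ.sort_nodup _
    have hlctf : lc.toFinset = Dᶜ := Dᶜ.sort_toFinset _
    have hlclen : lc.length = Dᶜ.card := Finset.length_sort _
    have hmemlc : ∀ i ∈ lc, i ∉ D := by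
      intro i hi
      have : i ∈ Dᶜ := by rw [← hlctf]; exact List.mem_toFinset.mpr hi
      simpa using this
    set Qp : Fin n → List (Finset (Fin n)) :=
      (fun i => (∅ : Finset (Fin n)) :: (cum {i} l ++ [D])) with hQpdef
    set R : List (Finset (Fin n)) :=
      (∅ : Finset (Fin n)) :: ((cum ∅ l).map (·ᶜ) ++ [D]) with hRdef
    have hQmem : ∀ i, i ∉ D → ∀ X ∈ Qp i, X = ∅ ∨ X = D ∨ (i ∈ X ∧ X ⊆ insert i D) := by
      intro i hiD X hX
      rw [hQpdef] at hX
      simp only [List.mem_cons, List.mem_append, List.mem_singleton, List.not_mem_nil,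
        or_false] at hX
      rcases hX with rfl | hX | rfl
      · left; rfl
      · right; right
        obtain ⟨s, rfl⟩ := cum_mem hX
        constructor
        · exact Finset.mem_union_left _ (Finset.mem_singleton_self i)
        · intro x hx
          rw [Finset.mem_union] at hx
          rcases hx with hx | hx
          · rw [Finset.mem_singleton] at hx
            exact hx ▸ Finset.mem_insert_self i D
          · rw [List.mem_toFinset] at hx
            exact Finset.mem_insert_of_mem (hltf ▸ List.mem_toFinset.mpr (List.take_subset _ _ hx))
      · right; left; rfl
    have hRmem : ∀ X ∈ R, X = ∅ ∨ X = D ∨ Dᶜ ⊆ X := by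
      intro X hX
      rw [hRdef] at hX
      simp only [List.mem_cons, List.mem_append, List.mem_singleton, List.mem_map,
        List.not_mem_nil, or_false] at hX
      rcases hX with rfl | ⟨Y, hY, rfl⟩ | rfl
      · left; rfl
      · right; right
        have : Y ⊆ D := (cum_subset hY).trans (le_of_eq hltf)
        exact Finset.compl_subset_compl.mpr this
      · right; left; rfl
    have hQB : ∀ i, i ∉ D → ∃ hL : Qp i ≠ [],
        (Qp i).head hL = ∅ ∧ (Qp i).getLast hL = D ∧ List.Chain' AdjSets (Qp i) := by
      intro i hiD
      rw [hQpdef]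
      refine ⟨by simp, List.head_cons, ?_, ?_⟩
      · rw [List.getLast_cons (by simp), List.getLast_concat]
      · unfold List.Chain'; rw [List.isChain_cons]
        constructor
        · intro y hy
          have hne : cum {i} l ++ [D] ≠ [] := by simp
          rw [List.head?_eq_head hne] at hy
          have : (cum {i} l ++ [D]).head hne = {i} := by
            have h1 : cum {i} l ≠ [] := cum_ne_nil _ _
            rw [List.head_append]
            simp only [List.isEmpty_iff, h1, dite_false]
            exact cum_head _ _
          rw [this] at hy
          rw [Option.mem_some_iff] at hy
          subst hy
          left
          rw [show (∅ : Finset (Fin n)) = ⊥ from rfl, bot_symmDiff]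
          exact Finset.card_singleton i
        · rw [List.isChain_append]
          refine ⟨cum_chain' _ _ hlnd ?_, by simp, ?_⟩
          · intro a ha
            rw [Finset.mem_singleton]
            rintro rfl
            exact hiD (hltf ▸ List.mem_toFinset.mpr ha)
          · intro x hx y hy
            rw [List.getLast?_eq_getLast (cum_ne_nil _ _), Option.mem_some_iff] at hx
            simp only [List.head?_cons, Option.mem_some_iff] at hy
            subst hx; subst hy
            rw [cum_getLast]
            left
            have : ({i} : Finset (Fin n)) ∪ l.toFinset = insert i D := by
              rw [hltf]; ext x; simp
            rw [this, symmDiff_comm, symmDiff_insert' hiD]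
            exact Finset.card_singleton i
    have hRB : ∃ hL : R ≠ [],
        R.head hL = ∅ ∧ R.getLast hL = D ∧ List.Chain' AdjSets R := by
      rw [hRdef]
      refine ⟨by simp, List.head_cons, ?_, ?_⟩
      · rw [List.getLast_cons (by simp), List.getLast_concat]
      · unfold List.Chain'; rw [List.isChain_cons]
        constructor
        · intro y hy
          have hmapne : (cum (∅:Finset (Fin n)) l).map (·ᶜ) ≠ [] :=
            fun h => cum_ne_nil (∅:Finset (Fin n)) l (List.map_eq_nil_iff.mp h)
          have hne : (cum (∅:Finset (Fin n)) l).map (·ᶜ) ++ [D] ≠ [] := by simp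
          rw [List.head?_eq_head hne] at hy
          have : ((cum (∅:Finset (Fin n)) l).map (·ᶜ) ++ [D]).head hne = Finset.univ := by
            rw [List.head_append]
            simp only [List.isEmpty_iff, hmapne, dite_false]
            rw [List.head_map, cum_head]
            simp
          rw [this, Option.mem_some_iff] at hy
          subst hy
          right
          rw [show (∅ : Finset (Fin n)) = ⊥ from rfl, bot_symmDiff]
        · rw [List.isChain_append]
          refine ⟨?_, by simp, ?_⟩
          · rw [List.isChain_map]
            refine (cum_chain' _ _ hlnd (by simp)).imp ?_
            intro a b h
            rcases h with h | h
            · left; rwa [compl_symmDiff_compl]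
            · right; rwa [compl_symmDiff_compl]
          · intro x hx y hy
            rw [List.getLast?_map, List.getLast?_eq_getLast (cum_ne_nil _ _)] at hx
            simp at hx
            simp only [List.head?_cons, Option.mem_some_iff] at hy
            subst hx; subst hy
            rw [cum_getLast, Finset.empty_union, hltf]
            right
            exact symmDiff_compl_self' D
    refine reach_of_paths (by omega) u v W hu hv D hflip (cyc ++ (lc.map Qp ++ [R])) ?_ ?_ ?_
    · have hcc := Finset.card_add_card_compl D
      simp only [Fintype.card_fin] at hcc
      simp only [List.length_append, List.length_map, List.length_range, List.length_cons,
        List.length_nil, hlen, hlclen]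
      omega
    · intro L hL
      rw [List.mem_append, List.mem_append] at hL
      rcases hL with hL | hL | hL
      · exact hcycB L hL
      · rw [List.mem_map] at hL
        obtain ⟨i, hi, rfl⟩ := hL
        exact hQB i (hmemlc i hi)
      · rw [List.mem_singleton] at hL
        subst hL
        exact hRB
    · rw [List.pairwise_append]
      refine ⟨hcycpair, ?_, ?_⟩
      · rw [List.pairwise_append]
        refine ⟨?_, List.Pairwise.cons (fun _ h => absurd h List.not_mem_nil) List.Pairwise.nil, ?_⟩
        · rw [List.pairwise_map]
          refine hlcnd.imp_of_mem ?_
          intro i i' hi hi' hne X hX hX'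
          rcases hQmem i (hmemlc i hi) X hX with rfl | rfl | ⟨hiX, hXsub⟩
          · left; rfl
          · right; rfl
          · rcases hQmem i' (hmemlc i' hi') X hX' with rfl | rfl | ⟨hi'X, hX'sub⟩
            · left; rfl
            · right; rfl
            · exfalso
              have := hXsub hi'X
              rw [Finset.mem_insert] at this
              rcases this with h | h
              · exact hne h.symm
              · exact hmemlc i' hi' h
        · intro L1 hL1 L2 hL2 X hX hX'
          rw [List.mem_map] at hL1
          obtain ⟨i, hi, rfl⟩ := hL1
          rw [List.mem_singleton] at hL2
          subst hL2
          rcases hQmem i (hmemlc i hi) X hX with rfl | rfl | ⟨hiX, hXsub⟩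
          · left; rfl
          · right; rfl
          · rcases hRmem X hX' with rfl | rfl | hsub
            · left; rfl
            · right; rfl
            · exfalso
              obtain ⟨b, hb, hbne⟩ := Finset.exists_mem_ne (s := Dᶜ) (by omega) i
              have := hXsub (hsub hb)
              rw [Finset.mem_insert] at this
              rcases this with h | h
              · exact hbne h
              · rw [Finset.mem_compl] at hb
                exact hb h
      · intro L hL L' hL' X hX hX'
        have hXD : X ⊆ D := hcycmem L hL X hX
        rw [List.mem_append] at hL'
        rcases hL' with hL' | hL'
        · rw [List.mem_map] at hL'
          obtain ⟨i, hi, rfl⟩ := hL'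
          rcases hQmem i (hmemlc i hi) X hX' with rfl | rfl | ⟨hiX, _⟩
          · left; rfl
          · right; rfl
          · exact absurd (hXD hiX) (hmemlc i hi)
        · rw [List.mem_singleton] at hL'
          subst hL'
          rcases hRmem X hX' with rfl | rfl | hsub
          · left; rfl
          · right; rfl
          · exfalso
            obtain ⟨b, hb⟩ := hDcne
            have := hXD (hsub hb)
            rw [Finset.mem_compl] at hb
            exact hb this

-- §9 final
lemma walk_first_step {V : Type*} {G : SimpleGraph V} {a b : V} (w : G.Walk a b)
    (h : a ≠ b) : ∃ c, G.Adj a c := by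
  cases w with
  | nil => exact absurd rfl h
  | cons h' p => exact ⟨_, h'⟩

lemma two_pow_lower (n : ℕ) (h : 2 ≤ n) : n + 2 ≤ 2 ^ n := by
  induction n with
  | zero => omega
  | succ m ih =>
    rcases Nat.lt_or_ge m 2 with hm | hm
    · interval_cases m <;> simp <;> omega
    · have := ih hm
      have h2 : 2 ^ m ≥ 1 := Nat.one_le_two_pow
      rw [pow_succ]
      omega

lemma card_V (n : ℕ) : Fintype.card (Fin n → Bool) = 2 ^ n := by
  simp [Fintype.card_fun]

lemma adj_zero_mem {n : ℕ} (b : Fin n → Bool)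
    (h : (FQ n).Adj (fun _ => false) b) :
    (∃ i, b = fun j => decide (j = i)) ∨ b = fun _ => true := by
  obtain ⟨hne, h1 | h2⟩ := h
  · obtain ⟨i0, hi0⟩ := Finset.card_eq_one.mp h1
    left
    refine ⟨i0, funext fun j => ?_⟩
    have hmem := Finset.ext_iff.mp hi0 j
    simp only [Finset.mem_filter, Finset.mem_univ, true_and, Finset.mem_singleton] at hmem
    by_cases hj : j = i0
    · have hf : false ≠ b j := hmem.mpr hj
      have hbt : b j = true := by
        cases hbj : b j
        · exact absurd hbj.symm hf
        · rfl
      rw [hbt, hj]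
      simp
    · have : ¬(false ≠ b j) := fun hc => hj (hmem.mp hc)
      push_neg at this
      rw [← this]
      simp [hj]
  · right
    funext j
    have := h2 j
    cases hbj : b j
    · rw [hbj] at this; simp at this
    · rfl

theorem vconn_FQ (n : ℕ) (hn : 2 ≤ n) : vconn (FQ n) = n + 1 := by
  classical
  have hpow := two_pow_lower n hn
  -- the cut: neighbors of zero
  set zero : Fin n → Bool := fun _ => false with hzero
  set Wn : Finset (Fin n → Bool) :=
    (Finset.univ.image (fun i : Fin n => (fun j => decide (j = i) : Fin n → Bool))) ∪
      {fun _ => true} with hWndef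
  have hones_notmem : (fun _ => true : Fin n → Bool) ∉
      Finset.univ.image (fun i : Fin n => (fun j => decide (j = i) : Fin n → Bool)) := by
    rw [Finset.mem_image]
    rintro ⟨i, _, hi⟩
    obtain ⟨i', hii⟩ : ∃ i' : Fin n, i' ≠ i := by
      rcases Finset.exists_mem_ne (s := (Finset.univ : Finset (Fin n)))
        (by simp; omega) i with ⟨i', _, h⟩
      exact ⟨i', h⟩
    have := congrFun hi i'
    simp [hii] at this
  have hinj : Set.InjOn (fun i : Fin n => (fun j => decide (j = i) : Fin n → Bool))
      ↑(Finset.univ : Finset (Fin n)) := by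
    intro a _ b _ hab
    have := congrFun hab a
    simpa using this
  have hWncard : Wn.card = n + 1 := by
    rw [hWndef, Finset.card_union_of_disjoint (by simpa using hones_notmem)]
    rw [Finset.card_image_of_injOn hinj]
    simp
  have hmemWn : ∀ b, (FQ n).Adj zero b → b ∈ Wn := by
    intro b hb
    rcases adj_zero_mem b hb with ⟨i, rfl⟩ | rfl
    · rw [hWndef]
      exact Finset.mem_union_left _ (Finset.mem_image.mpr ⟨i, Finset.mem_univ i, rfl⟩)
    · exact Finset.mem_union_right _ (Finset.mem_singleton_self _)
  have hzero_notmem : zero ∉ Wn := by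
    rw [hWndef, Finset.mem_union, Finset.mem_image]
    rintro (⟨i, _, hi⟩ | h)
    · have := congrFun hi i
      simp [hzero] at this
    · rw [Finset.mem_singleton] at h
      have := congrFun h ⟨0, by omega⟩
      simp [hzero] at this
  -- upper bound
  have hub : vconn (FQ n) ≤ n + 1 := by
    rw [vconn]
    apply Nat.sInf_le
    refine ⟨Wn, hWncard, ?_⟩
    rcases Nat.lt_or_ge n 3 with h3 | h3
    · right
      rw [card_V, hWncard]
      have : n = 2 := by omega
      subst this
      norm_num
    · left
      intro hconn
      -- z has exactly two trues
      set z : Fin n → Bool := fun j => decide (j.val < 2) with hzdef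
      have hzne : z ≠ zero := by
        intro h
        have := congrFun h ⟨0, by omega⟩
        simp [hzdef, hzero] at this
      have hz_notmem : z ∉ Wn := by
        rw [hWndef, Finset.mem_union, Finset.mem_image]
        rintro (⟨i, _, hi⟩ | h)
        · have h0 := congrFun hi ⟨0, by omega⟩
          have h1 := congrFun hi ⟨1, by omega⟩
          simp only [hzdef, decide_eq_decide] at h0 h1
          have e0 : (⟨0, by omega⟩ : Fin n) = i := h0.mpr (by omega)
          have e1 : (⟨1, by omega⟩ : Fin n) = i := h1.mpr (by omega)
          rw [← e1] at e0
          exact absurd (congrArg Fin.val e0) (by simp)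
        · rw [Finset.mem_singleton] at h
          have := congrFun h ⟨2, by omega⟩
          simp [hzdef] at this
      have hzc : z ∈ (↑Wn : Set (Fin n → Bool))ᶜ := by simpa using hz_notmem
      have hzeroc : zero ∈ (↑Wn : Set (Fin n → Bool))ᶜ := by simpa using hzero_notmem
      have hreach := hconn.preconnected ⟨zero, hzeroc⟩ ⟨z, hzc⟩
      obtain ⟨w⟩ := hreach
      obtain ⟨c, hc⟩ := walk_first_step w (fun h => hzne (congrArg Subtype.val h).symm)
      have hadj : (FQ n).Adj zero c.val := hc
      have hbW : c.val ∈ Wn := hmemWn c.val hadj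
      have hp := c.property
      simp only [Set.mem_compl_iff, Finset.mem_coe] at hp
      exact hp hbW
  -- lower bound
  have hlb : n + 1 ≤ vconn (FQ n) := by
    rw [vconn]
    apply le_csInf
    · exact ⟨Fintype.card (Fin n → Bool), Finset.univ, by simp,
        Or.inr (by simp)⟩
    · rintro m ⟨W, hWcard, hdis⟩
      by_contra hlt
      push_neg at hlt
      have hWle : W.card ≤ n := by omega
      rcases hdis with hdisc | hcard
      · apply hdisc
        have hne : ∃ x, x ∉ W := by
          have : Wᶜ.Nonempty := Finset.card_pos.mp (by
            rw [Finset.card_compl, card_V]; omega)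
          obtain ⟨x, hx⟩ := this
          exact ⟨x, by simpa using hx⟩
        obtain ⟨x0, hx0⟩ := hne
        rw [SimpleGraph.connected_iff]
        constructor
        · intro a b
          obtain ⟨a, ha⟩ := a
          obtain ⟨b, hb⟩ := b
          by_cases hab : a = b
          · subst hab; rfl
          · exact fq_conn_aux hn W hWle a b hab (by simpa using ha) (by simpa using hb)
        · exact ⟨⟨x0, by simpa using hx0⟩⟩
      · rw [card_V] at hcard
        omega
  omega
end
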